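/- arXiv:2206.12087 — 5 statements merged into one kernel-verified Lean document; each statement's English description precedes it below -/
import Mathlib

section
/- For every n ≥ 0, the number of zigzag knight's paths of length 2n that start at the origin and end on the x-axis equals the Catalan number C(n+1) = (1/(n+2))·binom(2n+2, n+1). -/
open List

/-- The four right-moves of a knight. -/
def KnightSteps : Set (ℤ × ℤ) := {(2,1), (2,-1), (1,2), (1,-2)}

/-- All partial sums of the y-coordinates are nonnegative (the path stays in ℕ²). -/
def NonnegHeights (p : List (ℤ × ℤ)) : Prop :=
  ∀ i, 0 ≤ ((p.take i).map Prod.snd).sum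

/-- A partial knight's path: steps from `KnightSteps`, never going below the x-axis. -/
def IsPartialKnight (p : List (ℤ × ℤ)) : Prop :=
  (∀ s ∈ p, s ∈ KnightSteps) ∧ NonnegHeights p

/-- Any two consecutive steps have vertical components of opposite sign. -/
def IsZigzag (p : List (ℤ × ℤ)) : Prop :=
  List.Chain' (fun a b => a.2 * b.2 < 0) p

/-- A partial zigzag knight's path. -/
def IsPartialZigzag (p : List (ℤ × ℤ)) : Prop :=
  IsPartialKnight p ∧ IsZigzag p

/-- The height of the endpoint of a path. -/
def pathHeight (p : List (ℤ × ℤ)) : ℤ := (p.map Prod.snd).sum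

/-- The size (x-coordinate of the endpoint) of a path. -/
def pathSize (p : List (ℤ × ℤ)) : ℤ := (p.map Prod.fst).sum

/-- A zigzag knight's path ending on the x-axis. -/
def IsZigzagKnightPath (p : List (ℤ × ℤ)) : Prop :=
  IsPartialZigzag p ∧ pathHeight p = 0

/-- The last step of `p` exists and is an up-step. -/
def EndsWithUp (p : List (ℤ × ℤ)) : Prop :=
  ∃ s, p.getLast? = some s ∧ 0 < s.2

/-- The last step of `p` exists and is a down-step. -/
def EndsWithDown (p : List (ℤ × ℤ)) : Prop :=
  ∃ s, p.getLast? = some s ∧ s.2 < 0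

def Estep : ℤ × ℤ := (2, 1)
def Ebar  : ℤ × ℤ := (2, -1)
def Nstep : ℤ × ℤ := (1, 2)
def Nbar  : ℤ × ℤ := (1, -2)

namespace ZZaux

open DyckStep

/-- Two-at-a-time induction on lists. -/
lemma twoStep {α : Type*} (P : List α → Prop) (h0 : P []) (h1 : ∀ a, P [a])
    (h2 : ∀ a b t, P t → P (a :: b :: t)) (p : List α) : P p := by
  have key : ∀ n (q : List α), q.length ≤ n → P q := by
    intro n
    induction n with
    | zero =>
      intro q hq
      have : q = [] := List.eq_nil_of_length_eq_zero (Nat.le_zero.mp hq)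
      simpa [this] using h0
    | succ n ih =>
      intro q hq
      rcases q with _ | ⟨a, _ | ⟨b, t⟩⟩
      · exact h0
      · exact h1 a
      · refine h2 a b t (ih t ?_)
        simp only [List.length_cons] at hq
        omega
  exact key p.length p le_rfl

def val (c : DyckStep) : ℤ := if c = U then 1 else -1

def H (l : List DyckStep) : ℤ := (l.map val).sum

@[simp] lemma H_nil : H [] = 0 := rfl

@[simp] lemma H_cons (c : DyckStep) (l : List DyckStep) : H (c :: l) = val c + H l := by
  simp [H]

@[simp] lemma H_append (l m : List DyckStep) : H (l ++ m) = H l + H m := by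
  simp [H]

lemma H_eq_count (l : List DyckStep) : H l = (l.count U : ℤ) - l.count D := by
  induction l with
  | nil => simp
  | cons c l ih =>
    cases c <;> simp [val, List.count_cons, ih] <;> ring

lemma neg_one_le_val (c : DyckStep) : -1 ≤ val c := by cases c <;> simp [val]

lemma H_take_succ (l : List DyckStep) (i : ℕ) :
    H (l.take i) - 1 ≤ H (l.take (i + 1)) := by
  rw [List.take_succ]
  cases h : l[i]? with
  | none => simp
  | some c =>
    simp only [Option.toList_some, H_append, H_cons, H_nil]
    have := neg_one_le_val c
    linarith

/-- Decode a list of Dyck steps (two at a time) into knight's steps. -/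
def dec : List DyckStep → List (ℤ × ℤ)
  | c :: d :: rest =>
      (if d = U then Nstep else Estep) :: (if c = U then Ebar else Nbar) :: dec rest
  | _ => []

/-- Encode knight's steps (two at a time) into Dyck steps. -/
def enc : List (ℤ × ℤ) → List DyckStep
  | a :: b :: rest =>
      (if b.2 = -1 then U else D) :: (if a.2 = 2 then U else D) :: enc rest
  | _ => []

@[simp] lemma dec_nil : dec [] = [] := rfl
@[simp] lemma dec_single (c : DyckStep) : dec [c] = [] := rfl
@[simp] lemma dec_cons (c d : DyckStep) (rest : List DyckStep) :
    dec (c :: d :: rest) =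
      (if d = U then Nstep else Estep) :: (if c = U then Ebar else Nbar) :: dec rest := rfl

@[simp] lemma enc_nil : enc [] = [] := rfl
@[simp] lemma enc_single (a : ℤ × ℤ) : enc [a] = [] := rfl
@[simp] lemma enc_cons (a b : ℤ × ℤ) (rest : List (ℤ × ℤ)) :
    enc (a :: b :: rest) =
      (if b.2 = -1 then U else D) :: (if a.2 = 2 then U else D) :: enc rest := rfl

/-- The structural property of zigzag paths: alternating up/down pairs. -/
inductive Alt : List (ℤ × ℤ) → Prop
  | nil : Alt []
  | cons {u d : ℤ × ℤ} {p : List (ℤ × ℤ)} :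
      (u = Estep ∨ u = Nstep) → (d = Ebar ∨ d = Nbar) → Alt p → Alt (u :: d :: p)

lemma alt_dec (l : List DyckStep) : Alt (dec l) := by
  induction l using twoStep with
  | h0 => exact Alt.nil
  | h1 a => exact Alt.nil
  | h2 c d rest ih =>
    rw [dec_cons]
    refine Alt.cons ?_ ?_ ih
    · split <;> simp
    · split <;> simp

lemma dec_length (l : List DyckStep) (hl : Even l.length) : (dec l).length = l.length := by
  induction l using twoStep with
  | h0 => simp
  | h1 a => simp at hl
  | h2 c d rest ih =>
    have he : Even rest.length := by
      simp only [List.length_cons] at hl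
      rw [Nat.even_iff] at hl ⊢; omega
    simp [ih he]

lemma dec_take (l : List DyckStep) (k : ℕ) :
    (dec l).take (2 * k) = dec (l.take (2 * k)) := by
  induction l using twoStep generalizing k with
  | h0 => simp
  | h1 a =>
    cases k with
    | zero => simp
    | succ k =>
      rw [List.take_of_length_le (by simp)]
      rfl
  | h2 c d rest ih =>
    cases k with
    | zero => simp
    | succ k =>
      have h2k : 2 * (k + 1) = (2 * k) + 1 + 1 := by ring
      rw [h2k]
      simp [ih k]

lemma H_dec (l : List DyckStep) (hl : Even l.length) :
    2 * pathHeight (dec l) = H l := by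
  induction l using twoStep with
  | h0 => simp [pathHeight]
  | h1 a => simp at hl
  | h2 c d rest ih =>
    have he : Even rest.length := by
      simp only [List.length_cons] at hl
      rw [Nat.even_iff] at hl ⊢; omega
    have := ih he
    cases c <;> cases d <;>
      simp_all [pathHeight, Estep, Ebar, Nstep, Nbar, val] <;> linarith

lemma enc_dec (l : List DyckStep) (hl : Even l.length) : enc (dec l) = l := by
  induction l using twoStep with
  | h0 => simp
  | h1 a => simp at hl
  | h2 c d rest ih =>
    have he : Even rest.length := by
      simp only [List.length_cons] at hl
      rw [Nat.even_iff] at hl ⊢; omega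
    cases c <;> cases d <;> simp_all [Estep, Ebar, Nstep, Nbar]

lemma alt_steps {p : List (ℤ × ℤ)} (h : Alt p) : ∀ s ∈ p, s ∈ KnightSteps := by
  induction h with
  | nil => simp
  | cons hu hd _ ih =>
    intro s hs
    simp only [List.mem_cons] at hs
    rcases hs with rfl | rfl | hs
    · rcases hu with h | h <;> simp [h, Estep, Nstep, KnightSteps]
    · rcases hd with h | h <;> simp [h, Ebar, Nbar, KnightSteps]
    · exact ih s hs

lemma alt_zig {p : List (ℤ × ℤ)} (h : Alt p) :
    IsZigzag p ∧ (∀ s, p.head? = some s → 0 < s.2) := by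
  induction h with
  | nil => exact ⟨List.isChain_nil, by simp⟩
  | @cons u d q hu hd _ ih =>
    have hu2 : 0 < u.2 := by rcases hu with h | h <;> simp [h, Estep, Nstep]
    have hd2 : d.2 < 0 := by rcases hd with h | h <;> simp [h, Ebar, Nbar]
    constructor
    · rw [IsZigzag, List.Chain', List.isChain_cons_cons]
      refine ⟨by nlinarith, ?_⟩
      rw [List.isChain_cons]
      refine ⟨?_, ih.1⟩
      intro r hr
      have hr2 : 0 < r.2 := ih.2 r hr
      nlinarith
    · intro s hs
      simp only [List.head?_cons, Option.some.injEq] at hs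
      subst hs; exact hu2

lemma alt_take {p : List (ℤ × ℤ)} (h : Alt p) (k : ℕ) : Alt (p.take (2 * k)) := by
  induction h generalizing k with
  | nil => simp; exact Alt.nil
  | @cons u d q hu hd _ ih =>
    cases k with
    | zero => simpa using Alt.nil
    | succ k =>
      have h2k : 2 * (k + 1) = (2 * k) + 1 + 1 := by ring
      rw [h2k]
      simpa using Alt.cons hu hd (ih k)

lemma alt_getElem_even {p : List (ℤ × ℤ)} (h : Alt p) :
    ∀ k s, p[2 * k]? = some s → 0 < s.2 := by
  induction h with
  | nil => simp
  | @cons u d q hu hd _ ih =>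
    intro k s hs
    cases k with
    | zero =>
      simp only [Nat.mul_zero, List.getElem?_cons_zero, Option.some.injEq] at hs
      subst hs
      rcases hu with h | h <;> simp [h, Estep, Nstep]
    | succ k =>
      have h2k : 2 * (k + 1) = (2 * k) + 2 := by ring
      rw [h2k] at hs
      simp only [List.getElem?_cons_succ] at hs
      exact ih k s hs

lemma dec_enc {p : List (ℤ × ℤ)} (h : Alt p) : dec (enc p) = p := by
  induction h with
  | nil => simp
  | @cons u d q hu hd _ ih =>
    rcases hu with h | h <;> rcases hd with h' | h' <;>
      simp [h, h', Estep, Ebar, Nstep, Nbar, ih]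

lemma enc_length {p : List (ℤ × ℤ)} (h : Alt p) : (enc p).length = p.length := by
  induction h with
  | nil => simp
  | cons hu hd _ ih => simp [ih]

lemma alt_length_even {p : List (ℤ × ℤ)} (h : Alt p) : Even p.length := by
  induction h with
  | nil => simp
  | cons _ _ _ ih => rw [Nat.even_iff] at ih ⊢; simp; omega

lemma H_enc {p : List (ℤ × ℤ)} (h : Alt p) : H (enc p) = 2 * pathHeight p := by
  induction h with
  | nil => simp [pathHeight]
  | @cons u d q hu hd _ ih =>
    rcases hu with h | h <;> rcases hd with h' | h' <;>
      simp_all [pathHeight, Estep, Ebar, Nstep, Nbar, val] <;> linarith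

lemma enc_take (p : List (ℤ × ℤ)) (k : ℕ) :
    (enc p).take (2 * k) = enc (p.take (2 * k)) := by
  induction p using twoStep generalizing k with
  | h0 => simp
  | h1 a =>
    cases k with
    | zero => simp
    | succ k =>
      rw [List.take_of_length_le (by simp)]
      rfl
  | h2 a b t ih =>
    cases k with
    | zero => simp
    | succ k =>
      have h2k : 2 * (k + 1) = (2 * k) + 1 + 1 := by ring
      rw [h2k]
      simp [ih k]

/-- A valid zigzag path of even length has the Alt structure. -/
lemma alt_of_valid (p : List (ℤ × ℤ)) (hk : ∀ s ∈ p, s ∈ KnightSteps)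
    (hz : IsZigzag p) (hh : ∀ s, p.head? = some s → 0 < s.2) (he : Even p.length) :
    Alt p := by
  induction p using twoStep with
  | h0 => exact Alt.nil
  | h1 a => simp at he
  | h2 a b t ih =>
    have ha : a ∈ KnightSteps := hk a (by simp)
    have hb : b ∈ KnightSteps := hk b (by simp)
    have ha2 : 0 < a.2 := hh a rfl
    have hab : a.2 * b.2 < 0 := (List.isChain_cons_cons.mp hz).1
    have hb2 : b.2 < 0 := by nlinarith
    have hzt : IsZigzag (b :: t) := (List.isChain_cons_cons.mp hz).2
    refine Alt.cons ?_ ?_ (ih (fun s hs => hk s (by simp [hs])) hzt.tail ?_ ?_)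
    · simp only [KnightSteps, Set.mem_insert_iff, Set.mem_singleton_iff] at ha
      rcases ha with h | h | h | h
      · left; rw [Estep]; exact h
      · exfalso; rw [h] at ha2; norm_num at ha2
      · right; rw [Nstep]; exact h
      · exfalso; rw [h] at ha2; norm_num at ha2
    · simp only [KnightSteps, Set.mem_insert_iff, Set.mem_singleton_iff] at hb
      rcases hb with h | h | h | h
      · exfalso; rw [h] at hb2; norm_num at hb2
      · left; rw [Ebar]; exact h
      · exfalso; rw [h] at hb2; norm_num at hb2
      · right; rw [Nbar]; exact h
    · intro s hs
      cases t with
      | nil => simp at hs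
      | cons r t' =>
        have hb_r : b.2 * r.2 < 0 := (List.isChain_cons_cons.mp hzt).1
        have hrs : r = s := by simpa using hs
        subst hrs
        nlinarith
    · simp only [List.length_cons] at he
      rw [Nat.even_iff] at he ⊢; omega

lemma pathHeight_take_def (p : List (ℤ × ℤ)) (i : ℕ) :
    ((p.take i).map Prod.snd).sum = pathHeight (p.take i) := rfl

/-- Make a Dyck word from height conditions. -/
def mkDyck (l : List DyckStep) (h0 : H l = 0) (h : ∀ i, 0 ≤ H (l.take i)) : DyckWord where
  toList := l
  count_U_eq_count_D := by
    have := H_eq_count l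
    omega
  count_D_le_count_U i := by
    have h1 := H_eq_count (l.take i)
    have h2 := h i
    omega

lemma getLast_of_cons {α : Type*} (a : α) (l t : List α) (h : l = a :: t) (ht : t ≠ [])
    (hl : l ≠ []) : l.getLast hl = t.getLast ht := by
  subst h
  exact List.getLast_cons ht

lemma alt_of_path {p : List (ℤ × ℤ)} (h : IsZigzagKnightPath p) (he : Even p.length) : Alt p := by
  refine alt_of_valid p h.1.1.1 h.1.2 ?_ he
  intro s hs
  cases p with
  | nil => simp at hs
  | cons a t =>
    simp only [List.head?_cons, Option.some.injEq] at hs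
    cases hs
    have h1 : (0 : ℤ) ≤ s.2 := by
      have := h.1.1.2 1
      simpa using this
    have h2 : s.2 ≠ 0 := by
      have hmem := h.1.1.1 s (by simp)
      simp only [KnightSteps, Set.mem_insert_iff, Set.mem_singleton_iff] at hmem
      rcases hmem with h | h | h | h <;> simp [h]
    omega

lemma fwd_nonneg {p : List (ℤ × ℤ)} (hAlt : Alt p) (hnn : NonnegHeights p) (j : ℕ) :
    -1 ≤ H ((enc p).take j) := by
  have heven : ∀ k, 0 ≤ H ((enc p).take (2 * k)) := by
    intro k
    rw [enc_take, H_enc (alt_take hAlt k)]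
    have h0 : 0 ≤ pathHeight (p.take (2 * k)) := hnn (2 * k)
    linarith
  rcases Nat.even_or_odd j with hj | hj
  · obtain ⟨k, hk⟩ := hj
    have : j = 2 * k := by omega
    rw [this]
    have := heven k
    linarith
  · obtain ⟨k, hk⟩ := hj
    rw [hk]
    have h1 := H_take_succ (enc p) (2 * k)
    have h2 := heven k
    linarith

/-- The Dyck word associated to a zigzag knight's path. -/
def dyckOf (p : List (ℤ × ℤ)) (hAlt : Alt p) (hnn : NonnegHeights p)
    (h0 : pathHeight p = 0) : DyckWord :=
  mkDyck (U :: enc p ++ [D])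
    (by simp [val, H_enc hAlt, h0])
    (by
      intro i
      cases i with
      | zero => simp
      | succ j =>
        rw [List.cons_append, List.take_succ_cons, H_cons]
        have key : -1 ≤ H ((enc p ++ [D]).take j) := by
          rcases le_or_gt j (enc p).length with hj | hj
          · rw [List.take_append_of_le_length hj]
            exact fwd_nonneg hAlt hnn j
          · rw [List.take_of_length_le (by simp; omega)]
            simp [val, H_enc hAlt, h0]
        have : val U = 1 := rfl
        linarith)

lemma dyckOf_toList (p : List (ℤ × ℤ)) (hAlt : Alt p) (hnn : NonnegHeights p)
    (h0 : pathHeight p = 0) : (dyckOf p hAlt hnn h0).toList = U :: enc p ++ [D] := rfl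

lemma dyckOf_semilength (n : ℕ) (p : List (ℤ × ℤ)) (hAlt : Alt p) (hnn : NonnegHeights p)
    (h0 : pathHeight p = 0) (hlen : p.length = 2 * n) :
    (dyckOf p hAlt hnn h0).semilength = n + 1 := by
  have h1 := DyckWord.two_mul_semilength_eq_length (p := dyckOf p hAlt hnn h0)
  rw [dyckOf_toList] at h1
  simp only [List.length_cons, List.length_append, List.length_cons, List.length_nil,
    enc_length hAlt, hlen] at h1
  omega

/-- Decomposition of a Dyck word of positive even length ≥ 2. -/
lemma dyck_decomp (w : DyckWord) (hne : w.toList ≠ []) (htne : w.toList.tail ≠ []) :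
    w.toList = U :: (w.toList.tail.dropLast ++ [D]) := by
  have h1 : w.toList = U :: w.toList.tail := by
    have h := List.cons_head_tail hne
    rw [DyckWord.head_eq_U w hne] at h
    exact h.symm
  have h3 : w.toList.tail.getLast htne = D := by
    rw [← getLast_of_cons U w.toList w.toList.tail h1 htne hne]
    exact DyckWord.getLast_eq_D w hne
  conv_lhs => rw [h1]
  congr 1
  rw [← h3]
  exact (List.dropLast_append_getLast htne).symm

/-- Full backward construction data. -/
lemma fromDyck_spec (n : ℕ) (w : DyckWord) (hw : w.semilength = n + 1) :
    ∃ m : List DyckStep,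
      w.toList = U :: (m ++ [D]) ∧ m.length = 2 * n ∧ Even m.length ∧ enc (dec m) = m ∧
      (IsZigzagKnightPath (dec m) ∧ (dec m).length = 2 * n) := by
  have hlen : w.toList.length = 2 * (n + 1) := by
    rw [← DyckWord.two_mul_semilength_eq_length, hw]
  have hne : w.toList ≠ [] := by
    intro h; rw [h] at hlen; simp at hlen
  have htne : w.toList.tail ≠ [] := by
    intro h
    have : w.toList.tail.length = 0 := by rw [h]; rfl
    rw [List.length_tail] at this
    omega
  set m := w.toList.tail.dropLast with hmdef
  have hdecomp : w.toList = U :: (m ++ [D]) := dyck_decomp w hne htne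
  have hmlen : m.length = 2 * n := by
    have := congrArg List.length hdecomp
    simp only [List.length_cons, List.length_append, List.length_nil] at this
    omega
  have heven : Even m.length := ⟨n, by omega⟩
  -- height facts from the Dyck word
  have hH0 : H w.toList = 0 := by
    have h1 := w.count_U_eq_count_D
    have h2 := H_eq_count w.toList
    omega
  have hHi : ∀ i, 0 ≤ H (w.toList.take i) := by
    intro i
    have h1 := w.count_D_le_count_U i
    have h2 := H_eq_count (w.toList.take i)
    omega
  have hm0 : H m = 0 := by
    rw [hdecomp] at hH0
    simp [val] at hH0
    linarith
  have hmtake : ∀ j, -1 ≤ H (m.take j) := by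
    intro j
    rcases le_or_gt j m.length with hj | hj
    · have h1 := hHi (j + 1)
      rw [hdecomp, List.take_succ_cons, List.take_append_of_le_length hj, H_cons] at h1
      have : val U = 1 := rfl
      linarith
    · rw [List.take_of_length_le (le_of_lt hj)]
      simp [hm0]
  refine ⟨m, hdecomp, hmlen, heven, enc_dec m heven, ?_, ?_⟩
  · have hAlt := alt_dec m
    have hph : pathHeight (dec m) = 0 := by
      have := H_dec m heven
      omega
    have hnnEven : ∀ k, 0 ≤ pathHeight ((dec m).take (2 * k)) := by
      intro k
      rw [dec_take m k]
      have hteven : Even ((m.take (2 * k)).length) := by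
        rw [List.length_take, hmlen]
        rcases le_or_gt (2 * k) (2 * n) with h | h
        · rw [min_eq_left h]; exact ⟨k, by omega⟩
        · rw [min_eq_right (le_of_lt h)]; exact ⟨n, by omega⟩
      have h2 := H_dec (m.take (2 * k)) hteven
      have h3 := hmtake (2 * k)
      omega
    refine ⟨⟨⟨alt_steps hAlt, ?_⟩, (alt_zig hAlt).1⟩, hph⟩
    intro i
    rcases Nat.even_or_odd i with hi | hi
    · obtain ⟨k, hk⟩ := hi
      have : i = 2 * k := by omega
      rw [this]
      exact hnnEven k
    · obtain ⟨k, hk⟩ := hi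
      rw [hk]
      show (0 : ℤ) ≤ (((dec m).take (2 * k + 1)).map Prod.snd).sum
      rw [List.take_succ]
      rw [List.map_append, List.sum_append]
      have h1 : (0 : ℤ) ≤ (((dec m).take (2 * k)).map Prod.snd).sum := hnnEven k
      have h2 : (0 : ℤ) ≤ (((dec m)[2 * k]?).toList.map Prod.snd).sum := by
        cases h : (dec m)[2 * k]? with
        | none => simp
        | some s =>
          have := alt_getElem_even hAlt k s h
          simp only [Option.toList_some, List.map_cons, List.map_nil, List.sum_cons,
            List.sum_nil, add_zero]
          linarith
      linarith
  · rw [dec_length m heven, hmlen]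

lemma even_of_len {p : List (ℤ × ℤ)} {n : ℕ} (h : p.length = 2 * n) : Even p.length :=
  ⟨n, by omega⟩

end ZZaux

open ZZaux DyckStep

/-- zigzag knight's paths of length 2n ending on the x-axis are
counted by the Catalan number C(n+1) = (1/(n+2))·binom(2n+2, n+1). -/
theorem stmt0 (n : ℕ) :
    Nat.card {p : List (ℤ × ℤ) // IsZigzagKnightPath p ∧ p.length = 2 * n}
      = catalan (n + 1) ∧
    (Nat.card {p : List (ℤ × ℤ) // IsZigzagKnightPath p ∧ p.length = 2 * n} : ℚ)
      = (1 / (n + 2)) * Nat.choose (2 * n + 2) (n + 1) := by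
  have e : {p : List (ℤ × ℤ) // IsZigzagKnightPath p ∧ p.length = 2 * n} ≃
      {w : DyckWord // w.semilength = n + 1} := by
    refine Equiv.ofBijective (fun x => ⟨dyckOf x.1
      (alt_of_path x.2.1 (even_of_len x.2.2))
      x.2.1.1.1.2 x.2.1.2, dyckOf_semilength n x.1 _ _ _ x.2.2⟩) ⟨?_, ?_⟩
    · intro x y hxy
      have hx := alt_of_path x.2.1 (even_of_len x.2.2)
      have hy := alt_of_path y.2.1 (even_of_len y.2.2)
      have h1 : (U :: enc x.1 ++ [D]) = (U :: enc y.1 ++ [D]) := by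
        have := congrArg (fun z => (z.1 : DyckWord).toList) hxy
        simpa [dyckOf_toList] using this
      have h2 : enc x.1 = enc y.1 := by
        simp only [List.cons_append, List.cons.injEq, true_and] at h1
        exact List.append_inj_left' h1 (by rfl)
      have h3 : x.1 = y.1 := by
        rw [← dec_enc hx, ← dec_enc hy, h2]
      exact Subtype.ext h3
    · rintro ⟨w, hw⟩
      obtain ⟨m, hdecomp, hmlen, heven, hed, hzz, hlen⟩ := fromDyck_spec n w hw
      refine ⟨⟨dec m, hzz, hlen⟩, ?_⟩
      apply Subtype.ext
      apply DyckWord.ext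
      rw [dyckOf_toList, hdecomp, hed]
      simp
  have key : Nat.card {p : List (ℤ × ℤ) // IsZigzagKnightPath p ∧ p.length = 2 * n}
      = catalan (n + 1) := by
    rw [Nat.card_congr e, Nat.card_eq_fintype_card,
      DyckWord.card_dyckWord_semilength_eq_catalan]
  refine ⟨key, ?_⟩
  rw [key, catalan_eq_centralBinom_div]
  have hdvd : (n + 1 + 1) ∣ (n + 1).centralBinom := Nat.succ_dvd_centralBinom (n + 1)
  rw [Nat.cast_div hdvd (by positivity)]
  have hcb : (n + 1).centralBinom = Nat.choose (2 * n + 2) (n + 1) := by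
    have h22 : 2 * (n + 1) = 2 * n + 2 := by ring
    rw [Nat.centralBinom, h22]
  rw [hcb]
  push_cast
  ring
end

section
/- There is no zigzag knight's path of odd length that starts at the origin and ends on the x-axis. -/
open List

/-- no zigzag knight's path of odd length ends on the x-axis. -/
theorem stmt1 :
    ¬ ∃ p : List (ℤ × ℤ), IsZigzagKnightPath p ∧ Odd p.length := by
  rintro ⟨p, ⟨⟨⟨hsteps, hnn⟩, hzig⟩, hend⟩, hodd⟩
  have hne : p ≠ [] := by rintro rfl; simp [Nat.odd_iff] at hodd
  have hy : ∀ s ∈ p, s.2 ≠ 0 := by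
    intro s hs
    have := hsteps s hs
    simp only [KnightSteps, Set.mem_insert_iff, Set.mem_singleton_iff] at this
    rcases this with h | h | h | h <;> subst h <;> decide
  have hchain := List.isChain_iff_getElem.mp hzig
  have hsign : ∀ i (h : i < p.length), 0 < (-1 : ℤ) ^ i * (p.get ⟨i, h⟩).2 := by
    intro i
    induction i with
    | zero =>
      intro h
      have h0 := hnn 1
      have ht : p.take 1 = [p.get ⟨0, h⟩] := by
        cases p with
        | nil => simp at h
        | cons a l => simp
      rw [ht] at h0
      simp only [List.map_cons, List.map_nil, List.sum_cons, List.sum_nil, add_zero] at h0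
      have hne0 : (p.get ⟨0, h⟩).2 ≠ 0 := hy _ (List.get_mem p _)
      simpa using lt_of_le_of_ne h0 (Ne.symm hne0)
    | succ i ih =>
      intro h
      have hi : i < p.length := Nat.lt_of_succ_lt h
      have hc : (p.get ⟨i, hi⟩).2 * (p.get ⟨i + 1, h⟩).2 < 0 := hchain i (by omega)
      have hprev := ih hi
      have hsq : ((-1 : ℤ) ^ i) ^ 2 = 1 := by
        rcases Nat.even_or_odd i with he | ho
        · rw [he.neg_one_pow]; ring
        · rw [ho.neg_one_pow]; ring
      have hg : p.get ⟨i + 1, h⟩ = p.get ⟨i + 1, by omega⟩ := rfl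
      rw [pow_succ]
      nlinarith [hprev, hc, hsq]
  -- the last index
  obtain ⟨k, hk⟩ := hodd
  have hlen : p.length = 2 * k + 1 := by omega
  have hlast : (2 * k : ℕ) < p.length := by omega
  have hpos : 0 < (p.get ⟨2 * k, hlast⟩).2 := by
    have := hsign (2 * k) hlast
    rwa [Even.neg_one_pow ⟨k, by ring⟩, one_mul] at this
  -- split the sum
  have hsum : ((p.take (2 * k + 1)).map Prod.snd).sum
      = ((p.take (2 * k)).map Prod.snd).sum + (p.get ⟨2 * k, hlast⟩).2 := by
    rw [List.map_take, List.map_take, List.sum_take_succ (p.map Prod.snd) (2 * k)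
      (by simpa using hlast)]
    simp
  have htake : p.take (2 * k + 1) = p := by
    rw [← hlen]; exact List.take_length
  have h1 := hnn (2 * k)
  rw [htake] at hsum
  have : pathHeight p > 0 := by
    unfold pathHeight
    rw [hsum]
    omega
  omega
end

section
/- For every n ≥ 0, the total number of partial zigzag knight's paths of length n (ending at any height in ℕ) equals the central binomial-type number binom(n+1, ⌊(n+1)/2⌋). -/
open List

lemma pathHeight_append (q : List (ℤ×ℤ)) (s : ℤ×ℤ) :
    pathHeight (q ++ [s]) = pathHeight q + s.2 := by
  simp [pathHeight]

lemma nonneg_height (q : List (ℤ×ℤ)) (H : NonnegHeights q) : 0 ≤ pathHeight q := by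
  have h := H q.length
  rwa [List.take_length] at h

lemma nonneg_append (q : List (ℤ×ℤ)) (s : ℤ×ℤ) :
    NonnegHeights (q ++ [s]) ↔ NonnegHeights q ∧ 0 ≤ pathHeight q + s.2 := by
  constructor
  · intro H
    refine ⟨fun i => ?_, ?_⟩
    · have h := H i
      rcases le_or_gt i q.length with hi | hi
      · rwa [List.take_append_of_le_length hi] at h
      · rw [List.take_of_length_le (by simp; omega)] at h
        have h2 := H q.length
        rw [List.take_append_of_le_length le_rfl, List.take_length] at h2
        rw [List.take_of_length_le (le_of_lt hi)]
        exact h2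
    · have h := H (q.length + 1)
      rw [List.take_of_length_le (by simp)] at h
      rwa [← pathHeight_append]
  · rintro ⟨H1, H2⟩ i
    rcases le_or_gt i q.length with hi | hi
    · rw [List.take_append_of_le_length hi]; exact H1 i
    · rw [List.take_of_length_le (by simp; omega)]
      rwa [← pathHeight_append] at H2

lemma knight_snd {s : ℤ×ℤ} (hs : s ∈ KnightSteps) :
    s.2 = 1 ∨ s.2 = 2 ∨ s.2 = -1 ∨ s.2 = -2 := by
  rcases hs with h | h | h | h <;> subst h <;> simp

lemma sign_alt (p : List (ℤ×ℤ)) (hp : IsPartialZigzag p) :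
    ∀ i (hi : i < p.length), (0 < (p.get ⟨i, hi⟩).2 ↔ i % 2 = 0) := by
  obtain ⟨⟨hsteps, hnn⟩, hzz⟩ := hp
  intro i
  induction i with
  | zero =>
    intro hi
    cases p with
    | nil => simp at hi
    | cons a t =>
      have h1 := hnn 1
      simp only [List.take_succ_cons, List.take_zero, List.map_cons, List.map_nil,
        List.sum_cons, List.sum_nil, add_zero] at h1
      have h2 := knight_snd (hsteps a (List.mem_cons_self))
      show 0 < a.2 ↔ 0 % 2 = 0
      norm_num
      omega
  | succ k ih =>
    intro hi
    have hk : k < p.length := by omega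
    have hkk := ih hk
    have hchain : (p.get ⟨k,hk⟩).2 * (p.get ⟨k+1,hi⟩).2 < 0 := (List.isChain_iff_getElem.mp hzz) k (by omega)
    have h1 : (p.get ⟨k,hk⟩) ∈ p := p.get_mem ⟨k, hk⟩
    have h2 : (p.get ⟨k+1,hi⟩) ∈ p := p.get_mem ⟨k+1, hi⟩
    have n1 := knight_snd (hsteps _ h1)
    have n2 := knight_snd (hsteps _ h2)
    rcases n1 with h|h|h|h <;> rcases n2 with g|g|g|g <;>
      rw [h, g] at hchain <;> rw [g] <;> rw [h] at hkk <;>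
      revert hchain hkk <;> norm_num <;> omega

open Finset in
def Zfin : ℕ → ℤ → Finset (List (ℤ × ℤ))
  | 0, h => if h = 0 then {([] : List (ℤ × ℤ))} else ∅
  | (m+1), h =>
    if m % 2 = 0 then
      (Zfin m (h-1)).image (fun p => p ++ [Estep]) ∪ (Zfin m (h-2)).image (fun p => p ++ [Nstep])
    else
      if 0 ≤ h then
        (Zfin m (h+1)).image (fun p => p ++ [Ebar]) ∪ (Zfin m (h+2)).image (fun p => p ++ [Nbar])
      else ∅

lemma last_sign (q : List (ℤ×ℤ)) (hq : IsPartialZigzag q) (x : ℤ×ℤ)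
    (hx : q.getLast? = some x) :
    (q.length % 2 = 1 → 0 < x.2) ∧ (q.length % 2 = 0 → x.2 < 0) := by
  have hne : q ≠ [] := by intro e; subst e; simp at hx
  have hlen : 0 < q.length := List.length_pos_iff.mpr hne
  have hx2 : x = q.getLast hne := by
    rw [List.getLast?_eq_getLast hne] at hx
    exact (Option.some_injective _ hx).symm
  have hx3 : x = q.get ⟨q.length - 1, by omega⟩ := by
    rw [hx2, List.getLast_eq_getElem]; rfl
  have hiff := sign_alt q hq (q.length - 1) (by omega)
  have hmem : x ∈ q := by rw [hx2]; exact q.getLast_mem hne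
  have hnz := knight_snd (hq.1.1 x hmem)
  rw [← hx3] at hiff
  constructor <;> intro hp <;> omega

lemma knight_mem_E : Estep ∈ KnightSteps := by left; rfl
lemma knight_mem_Eb : Ebar ∈ KnightSteps := by right; left; rfl
lemma knight_mem_N : Nstep ∈ KnightSteps := by right; right; left; rfl
lemma knight_mem_Nb : Nbar ∈ KnightSteps := by right; right; right; rfl

lemma build (q : List (ℤ×ℤ)) (s : ℤ×ℤ) (hq : IsPartialZigzag q)
    (hs : s ∈ KnightSteps) (hh : 0 ≤ pathHeight q + s.2)
    (hlink : ∀ x ∈ q.getLast?, x.2 * s.2 < 0) :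
    IsPartialZigzag (q ++ [s]) := by
  obtain ⟨⟨h1, h2⟩, h3⟩ := hq
  refine ⟨⟨?_, ?_⟩, ?_⟩
  · intro t ht
    rcases List.mem_append.mp ht with h | h
    · exact h1 t h
    · simp at h; subst h; exact hs
  · exact (nonneg_append q s).mpr ⟨h2, hh⟩
  · show List.Chain' _ (q ++ [s])
    rw [List.Chain', List.isChain_append]
    refine ⟨h3, List.isChain_singleton s, ?_⟩
    intro x hx y hy
    simp at hy; subst hy
    exact hlink x hx

lemma unbuild (q : List (ℤ×ℤ)) (s : ℤ×ℤ) (hp : IsPartialZigzag (q ++ [s])) :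
    IsPartialZigzag q ∧ s ∈ KnightSteps ∧ 0 ≤ pathHeight q + s.2 := by
  obtain ⟨⟨h1, h2⟩, h3⟩ := hp
  have h3' : List.Chain' (fun a b => a.2 * b.2 < 0) (q ++ [s]) := h3
  rw [List.Chain', List.isChain_append] at h3'
  rw [nonneg_append] at h2
  exact ⟨⟨⟨fun t ht => h1 t (List.mem_append.mpr (Or.inl ht)), h2.1⟩, h3'.1⟩,
    h1 s (List.mem_append.mpr (Or.inr (List.mem_singleton_self s))), h2.2⟩

lemma mem_Zfin : ∀ (m : ℕ) (h : ℤ) (p : List (ℤ×ℤ)),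
    p ∈ Zfin m h ↔ (IsPartialZigzag p ∧ p.length = m ∧ pathHeight p = h) := by
  intro m
  induction m with
  | zero =>
    intro h p
    simp only [Zfin]
    by_cases h0 : h = 0
    · subst h0
      rw [if_pos rfl]
      simp only [Finset.mem_singleton]
      constructor
      · rintro rfl
        refine ⟨⟨⟨by simp, fun i => by simp⟩, List.isChain_nil⟩, rfl, rfl⟩
      · rintro ⟨_, hl, _⟩
        exact List.length_eq_zero_iff.mp hl
    · rw [if_neg h0]
      simp only [Finset.notMem_empty, false_iff]
      rintro ⟨_, hl, hh⟩
      have : p = [] := List.length_eq_zero_iff.mp hl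
      subst this
      exact h0 (by simpa [pathHeight] using hh.symm)
  | succ m ih =>
    intro h p
    constructor
    · intro hp
      by_cases hm : m % 2 = 0
      · rw [show Zfin (m+1) h = (Zfin m (h-1)).image (fun p => p ++ [Estep]) ∪
            (Zfin m (h-2)).image (fun p => p ++ [Nstep]) from by rw [Zfin, if_pos hm]] at hp
        rcases Finset.mem_union.mp hp with hp' | hp' <;>
          obtain ⟨q, hq, rfl⟩ := Finset.mem_image.mp hp' <;>
          obtain ⟨hqz, hql, hqh⟩ := (ih _ q).mp hq
        · refine ⟨build q Estep hqz knight_mem_E ?_ ?_, by simp [hql], by rw [pathHeight_append, hqh]; norm_num [Estep]⟩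
          · have := nonneg_height q hqz.1.2; norm_num [Estep]; omega
          · intro x hx
            have hl := last_sign q hqz x hx
            have : x.2 < 0 := hl.2 (by omega)
            norm_num [Estep]
            omega
        · refine ⟨build q Nstep hqz knight_mem_N ?_ ?_, by simp [hql], by rw [pathHeight_append, hqh]; norm_num [Nstep]⟩
          · have := nonneg_height q hqz.1.2; norm_num [Nstep]; omega
          · intro x hx
            have hl := last_sign q hqz x hx
            have : x.2 < 0 := hl.2 (by omega)
            norm_num [Nstep]
            omega
      · rw [show Zfin (m+1) h = if 0 ≤ h then (Zfin m (h+1)).image (fun p => p ++ [Ebar]) ∪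
            (Zfin m (h+2)).image (fun p => p ++ [Nbar]) else ∅ from by rw [Zfin, if_neg hm]] at hp
        by_cases hh0 : 0 ≤ h
        swap
        · rw [if_neg hh0] at hp; simp at hp
        rw [if_pos hh0] at hp
        rcases Finset.mem_union.mp hp with hp' | hp' <;>
          obtain ⟨q, hq, rfl⟩ := Finset.mem_image.mp hp' <;>
          obtain ⟨hqz, hql, hqh⟩ := (ih _ q).mp hq
        · refine ⟨build q Ebar hqz knight_mem_Eb ?_ ?_, by simp [hql], by rw [pathHeight_append, hqh]; norm_num [Ebar]⟩
          · norm_num [Ebar]; omega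
          · intro x hx
            have hl := last_sign q hqz x hx
            have : 0 < x.2 := hl.1 (by omega)
            norm_num [Ebar]
            omega
        · refine ⟨build q Nbar hqz knight_mem_Nb ?_ ?_, by simp [hql], by rw [pathHeight_append, hqh]; norm_num [Nbar]⟩
          · norm_num [Nbar]; omega
          · intro x hx
            have hl := last_sign q hqz x hx
            have : 0 < x.2 := hl.1 (by omega)
            norm_num [Nbar]
            omega
    · rintro ⟨hpz, hlen, hh⟩
      have hne : p ≠ [] := by intro e; subst e; simp at hlen
      set s := p.getLast hne with hs
      have hdec : p.dropLast ++ [s] = p := List.dropLast_append_getLast hne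
      set q := p.dropLast with hqdef
      have hql : q.length = m := by
        rw [hqdef, List.length_dropLast, hlen]
        omega
      obtain ⟨hqz, hsK, _⟩ := unbuild q s (by rw [hdec]; exact hpz)
      have hqh : pathHeight q = h - s.2 := by
        have := pathHeight_append q s
        rw [hdec, hh] at this
        omega
      have hsign := last_sign p hpz s (List.getLast?_eq_getLast hne)
      have hsnd := knight_snd hsK
      have hq0 : 0 ≤ pathHeight p := nonneg_height p hpz.1.2
      by_cases hm : m % 2 = 0
      · have hpos : 0 < s.2 := hsign.1 (by omega)
        rw [show Zfin (m+1) h = (Zfin m (h-1)).image (fun p => p ++ [Estep]) ∪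
            (Zfin m (h-2)).image (fun p => p ++ [Nstep]) from by rw [Zfin, if_pos hm]]
        rcases hsK with hE | hE | hE | hE
        · refine Finset.mem_union_left _ (Finset.mem_image.mpr ⟨q, (ih _ q).mpr ⟨hqz, hql, ?_⟩, ?_⟩)
          · rw [hqh]; rw [show s = Estep from hE]; rfl
          · rw [show Estep = s from hE.symm]; exact hdec
        · exfalso; rw [hE] at hpos; norm_num at hpos
        · refine Finset.mem_union_right _ (Finset.mem_image.mpr ⟨q, (ih _ q).mpr ⟨hqz, hql, ?_⟩, ?_⟩)
          · rw [hqh]; rw [show s = Nstep from hE]; rfl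
          · rw [show Nstep = s from hE.symm]; exact hdec
        · exfalso; rw [hE] at hpos; norm_num at hpos
      · have hneg : s.2 < 0 := hsign.2 (by omega)
        rw [show Zfin (m+1) h = if 0 ≤ h then (Zfin m (h+1)).image (fun p => p ++ [Ebar]) ∪
            (Zfin m (h+2)).image (fun p => p ++ [Nbar]) else ∅ from by rw [Zfin, if_neg hm]]
        rw [if_pos (by rw [← hh]; exact hq0)]
        rcases hsK with hE | hE | hE | hE
        · exfalso; rw [hE] at hneg; norm_num at hneg
        · refine Finset.mem_union_left _ (Finset.mem_image.mpr ⟨q, (ih _ q).mpr ⟨hqz, hql, ?_⟩, ?_⟩)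
          · rw [hqh]; rw [show s = Ebar from hE]; norm_num [Ebar]
          · rw [show Ebar = s from hE.symm]; exact hdec
        · exfalso; rw [hE] at hneg; norm_num at hneg
        · refine Finset.mem_union_right _ (Finset.mem_image.mpr ⟨q, (ih _ q).mpr ⟨hqz, hql, ?_⟩, ?_⟩)
          · rw [hqh]; rw [show s = Nbar from hE]; norm_num [Nbar]
          · rw [show Nbar = s from hE.symm]; exact hdec
open List

/-- Extended binomial coefficient: `C(m, j)` for `j : ℤ`, zero for `j < 0`. -/
def ch (m : ℕ) (j : ℤ) : ℤ := if 0 ≤ j then m.choose j.toNat else 0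

lemma ch_pascal (m : ℕ) (j : ℤ) : ch (m+1) j = ch m j + ch m (j-1) := by
  unfold ch
  rcases lt_trichotomy j 0 with hj | hj | hj
  · rw [if_neg (by omega), if_neg (by omega), if_neg (by omega)]; ring
  · subst hj; norm_num
  · rw [if_pos (by omega), if_pos (by omega), if_pos (by omega)]
    have h1 : j.toNat = (j-1).toNat + 1 := by omega
    rw [h1, Nat.choose_succ_succ']
    push_cast; ring

lemma ch_zero_of_gt (m : ℕ) (j : ℤ) (h : (m:ℤ) < j) : ch m j = 0 := by
  unfold ch
  rcases le_or_gt 0 j with h0 | h0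
  · rw [if_pos h0, Nat.choose_eq_zero_of_lt (by omega)]; simp
  · rw [if_neg (by omega)]

def Acoef (M : ℕ) (j : ℤ) : ℤ := ch M j - ch M (j+1)

lemma A_pascal (M : ℕ) (j : ℤ) : Acoef (M+1) j = Acoef M (j-1) + Acoef M j := by
  unfold Acoef
  rw [ch_pascal M j, ch_pascal M (j+1)]
  simp only [add_sub_cancel_right]
  ring

lemma A_mid (m : ℕ) (hm : m % 2 = 0) : Acoef (m+1) ((m/2 : ℕ)) = 0 := by
  unfold Acoef ch
  rw [if_pos (by positivity), if_pos (by positivity)]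
  have h1 : ((m/2:ℕ):ℤ).toNat = m/2 := by omega
  have h2 : (((m/2:ℕ):ℤ)+1).toNat = m/2 + 1 := by omega
  rw [h1, h2]
  have h3 : (m+1).choose (m/2+1) = (m+1).choose (m/2) := by
    have h4 := Nat.choose_symm (n := m+1) (k := m/2) (by omega)
    have e : m + 1 - m/2 = m/2 + 1 := by omega
    rw [e] at h4; exact h4
  rw [h3]; ring

/-- closed form for number of partial zigzag paths of length `m` ending at height `h`. -/
def zfc (m : ℕ) (h : ℤ) : ℤ :=
  if m % 2 = 0 then (if 0 ≤ h then Acoef (m+1) ((m/2 : ℕ) + 1 + h) else 0)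
  else (if 1 ≤ h then Acoef (m+1) ((m/2 : ℕ) + h) else 0)

lemma zfc_zero (h : ℤ) : zfc 0 h = if h = 0 then 1 else 0 := by
  unfold zfc
  norm_num
  rcases lt_trichotomy h 0 with h0 | h0 | h0
  · rw [if_neg (by omega), if_neg (by omega)]
  · subst h0; decide
  · rw [if_pos (by omega), if_neg (by omega)]
    unfold Acoef
    rw [ch_zero_of_gt _ _ (by omega), ch_zero_of_gt _ _ (by omega)]
    ring

lemma zfc_rec_odd (m : ℕ) (hm : m % 2 = 0) (h : ℤ) :
    zfc (m+1) h = zfc m (h-1) + zfc m (h-2) := by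
  have e2 : (m+1)/2 = m/2 := by omega
  unfold zfc
  rw [if_neg (by omega), if_pos hm, if_pos hm, e2]
  rcases lt_trichotomy h 1 with h1 | h1 | h1
  · rw [if_neg (by omega), if_neg (by omega), if_neg (by omega)]; ring
  · subst h1
    rw [if_pos (by omega), if_pos (by omega), if_neg (by omega)]
    rw [A_pascal]
    have e3 : ((m/2:ℕ):ℤ) + 1 - 1 = ((m/2:ℕ):ℤ) := by ring
    have e4 : ((m/2:ℕ):ℤ) + 1 + ((1:ℤ)-1) = ((m/2:ℕ):ℤ) + 1 := by ring
    rw [e3, e4, A_mid m hm]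
    ring
  · rw [if_pos (by omega), if_pos (by omega), if_pos (by omega)]
    rw [A_pascal]
    have e3 : ((m/2:ℕ):ℤ) + h - 1 = ((m/2:ℕ):ℤ) + 1 + (h-2) := by ring
    have e4 : ((m/2:ℕ):ℤ) + 1 + (h-1) = ((m/2:ℕ):ℤ) + h := by ring
    rw [e3, e4]
    ring

lemma zfc_rec_even (m : ℕ) (hm : m % 2 = 1) (h : ℤ) :
    zfc (m+1) h = if 0 ≤ h then zfc m (h+1) + zfc m (h+2) else 0 := by
  have e2 : (m+1)/2 = m/2 + 1 := by omega
  unfold zfc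
  rw [if_pos (show (m+1) % 2 = 0 by omega), if_neg (show ¬ m % 2 = 0 by omega),
     if_neg (show ¬ m % 2 = 0 by omega), e2]
  rcases le_or_gt 0 h with h0 | h0
  · rw [if_pos h0, if_pos h0, if_pos (show (1:ℤ) ≤ h + 1 by omega),
       if_pos (show (1:ℤ) ≤ h + 2 by omega)]
    rw [A_pascal]
    have e3 : ((m/2+1:ℕ):ℤ) + 1 + h - 1 = ((m/2:ℕ):ℤ) + (h+1) := by push_cast; ring
    have e4 : ((m/2+1:ℕ):ℤ) + 1 + h = ((m/2:ℕ):ℤ) + (h+2) := by push_cast; ring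
    rw [e3, e4]
  · rw [if_neg (show ¬ (0:ℤ) ≤ h by omega), if_neg (show ¬ (0:ℤ) ≤ h by omega)]

lemma card_union_append (s t : Finset (List (ℤ×ℤ))) (a b : ℤ×ℤ) (hab : a ≠ b) :
    ((s.image (fun p => p ++ [a])) ∪ (t.image (fun p => p ++ [b]))).card
      = s.card + t.card := by
  have hd : Disjoint (s.image (fun p => p ++ [a])) (t.image (fun p => p ++ [b])) := by
    rw [Finset.disjoint_left]
    rintro x hx hx2
    obtain ⟨p, _, rfl⟩ := Finset.mem_image.mp hx
    obtain ⟨r, _, he⟩ := Finset.mem_image.mp hx2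
    have h2 := congrArg List.getLast? he
    rw [List.getLast?_concat, List.getLast?_concat] at h2
    exact hab (Option.some_injective _ h2.symm)
  rw [Finset.card_union_of_disjoint hd,
    Finset.card_image_of_injective _ (List.append_left_injective _),
    Finset.card_image_of_injective _ (List.append_left_injective _)]

lemma card_Zfin_up (m : ℕ) (hm : m % 2 = 0) (h : ℤ) :
    (Zfin (m+1) h).card = (Zfin m (h-1)).card + (Zfin m (h-2)).card := by
  rw [show Zfin (m+1) h = (Zfin m (h-1)).image (fun p => p ++ [Estep]) ∪
      (Zfin m (h-2)).image (fun p => p ++ [Nstep]) from by rw [Zfin, if_pos hm]]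
  exact card_union_append _ _ _ _ (by decide)

lemma card_Zfin_down (m : ℕ) (hm : m % 2 = 1) (h : ℤ) :
    (Zfin (m+1) h).card
      = if 0 ≤ h then (Zfin m (h+1)).card + (Zfin m (h+2)).card else 0 := by
  rw [show Zfin (m+1) h = (if 0 ≤ h then (Zfin m (h+1)).image (fun p => p ++ [Ebar]) ∪
      (Zfin m (h+2)).image (fun p => p ++ [Nbar]) else ∅) from by rw [Zfin, if_neg (by omega)]]
  by_cases h0 : 0 ≤ h
  · rw [if_pos h0, if_pos h0]
    exact card_union_append _ _ _ _ (by decide)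
  · rw [if_neg h0, if_neg h0]; simp

lemma card_zfc : ∀ (m : ℕ) (h : ℤ), ((Zfin m h).card : ℤ) = zfc m h := by
  intro m
  induction m with
  | zero =>
    intro h
    rw [zfc_zero]
    simp only [Zfin]
    by_cases h0 : h = 0
    · rw [if_pos h0, if_pos h0]; simp
    · rw [if_neg h0, if_neg h0]; simp
  | succ m ih =>
    intro h
    by_cases hm : m % 2 = 0
    · rw [card_Zfin_up m hm h, zfc_rec_odd m hm h]
      push_cast
      rw [ih, ih]
    · rw [card_Zfin_down m (by omega) h, zfc_rec_even m (by omega) h]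
      by_cases h0 : 0 ≤ h
      · rw [if_pos h0, if_pos h0]
        push_cast
        rw [ih, ih]
      · rw [if_neg h0, if_neg h0]; simp

lemma height_le (p : List (ℤ×ℤ)) (hp : IsPartialZigzag p) :
    pathHeight p ≤ 2 * p.length := by
  have hb : ∀ x ∈ p.map Prod.snd, x ≤ (2:ℤ) := by
    intro x hx
    obtain ⟨s, hs, rfl⟩ := List.mem_map.mp hx
    have := knight_snd (hp.1.1 s hs); omega
  have h2 := List.sum_le_card_nsmul (p.map Prod.snd) 2 hb
  rw [List.length_map, nsmul_eq_mul] at h2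
  calc pathHeight p = (p.map Prod.snd).sum := rfl
    _ ≤ (p.length : ℤ) * 2 := h2
    _ = 2 * p.length := by ring

def TotZ (n : ℕ) : Finset (List (ℤ×ℤ)) :=
  (Finset.range (2*n+1)).biUnion (fun k => Zfin n (k:ℤ))

lemma mem_TotZ (n : ℕ) (p : List (ℤ×ℤ)) :
    p ∈ TotZ n ↔ IsPartialZigzag p ∧ p.length = n := by
  simp only [TotZ, Finset.mem_biUnion, Finset.mem_range]
  constructor
  · rintro ⟨k, _, hp⟩
    have := (mem_Zfin n _ p).mp hp
    exact ⟨this.1, this.2.1⟩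
  · rintro ⟨hz, hl⟩
    have h0 : 0 ≤ pathHeight p := nonneg_height p hz.1.2
    have h1 : pathHeight p ≤ 2*n := by
      have := height_le p hz; rw [hl] at this; exact_mod_cast this
    refine ⟨(pathHeight p).toNat, by omega, ?_⟩
    rw [mem_Zfin]
    exact ⟨hz, hl, by omega⟩

lemma card_TotZ (n : ℕ) :
    ((TotZ n).card : ℤ) = ∑ k ∈ Finset.range (2*n+1), zfc n (k:ℤ) := by
  rw [TotZ, Finset.card_biUnion]
  · push_cast
    exact Finset.sum_congr rfl (fun k _ => card_zfc n (k:ℤ))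
  · intro i _ j _ hij
    rw [Function.onFun, Finset.disjoint_left]
    intro p hp hq
    have h1 := ((mem_Zfin n _ p).mp hp).2.2
    have h2 := ((mem_Zfin n _ p).mp hq).2.2
    exact hij (by exact_mod_cast h1.symm.trans h2)

lemma sum_zfc (n : ℕ) :
    ∑ k ∈ Finset.range (2*n+1), zfc n (k:ℤ) = ch (n+1) (((n/2 : ℕ):ℤ) + 1) := by
  by_cases hn : n % 2 = 0
  · have he : ∀ k ∈ Finset.range (2*n+1), zfc n (k:ℤ)
        = (fun j : ℕ => ch (n+1) (((n/2:ℕ):ℤ) + 1 + j)) k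
          - (fun j : ℕ => ch (n+1) (((n/2:ℕ):ℤ) + 1 + j)) (k+1) := by
      intro k _
      simp only [zfc, if_pos hn, if_pos (by positivity : (0:ℤ) ≤ (k:ℕ))]
      unfold Acoef
      have e : ((n/2:ℕ):ℤ) + 1 + (k:ℤ) + 1 = ((n/2:ℕ):ℤ) + 1 + ((k+1:ℕ):ℤ) := by push_cast; ring
      rw [e]
    rw [Finset.sum_congr rfl he, Finset.sum_range_sub']
    have hz : ch (n+1) (((n/2:ℕ):ℤ) + 1 + ((2*n+1:ℕ):ℤ)) = 0 :=
      ch_zero_of_gt _ _ (by push_cast; omega)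
    rw [hz]
    norm_num
  · rw [Finset.sum_range_succ']
    have g0 : zfc n ((0:ℕ):ℤ) = 0 := by
      simp only [zfc, if_neg hn]
      norm_num
    rw [g0, add_zero]
    have he : ∀ k ∈ Finset.range (2*n), zfc n ((k+1:ℕ):ℤ)
        = (fun j : ℕ => ch (n+1) (((n/2:ℕ):ℤ) + 1 + j)) k
          - (fun j : ℕ => ch (n+1) (((n/2:ℕ):ℤ) + 1 + j)) (k+1) := by
      intro k _
      simp only [zfc, if_neg hn, if_pos (by push_cast; omega : (1:ℤ) ≤ ((k+1:ℕ):ℤ))]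
      unfold Acoef
      have e1 : ((n/2:ℕ):ℤ) + ((k+1:ℕ):ℤ) = ((n/2:ℕ):ℤ) + 1 + (k:ℤ) := by push_cast; ring
      rw [e1]
      have e3 : ((n/2:ℕ):ℤ) + 1 + (k:ℤ) + 1 = ((n/2:ℕ):ℤ) + 1 + ((k+1:ℕ):ℤ) := by push_cast; ring
      rw [e3]
    rw [Finset.sum_congr rfl he, Finset.sum_range_sub']
    have hz : ch (n+1) (((n/2:ℕ):ℤ) + 1 + ((2*n:ℕ):ℤ)) = 0 :=
      ch_zero_of_gt _ _ (by push_cast; omega)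
    rw [hz]
    norm_num

/-- the total number of partial zigzag knight's paths of length n
is binom(n+1, ⌊(n+1)/2⌋). -/
theorem stmt2 (n : ℕ) :
    Nat.card {p : List (ℤ × ℤ) // IsPartialZigzag p ∧ p.length = n}
      = Nat.choose (n + 1) ((n + 1) / 2) := by
  have hcard : Nat.card {p : List (ℤ × ℤ) // IsPartialZigzag p ∧ p.length = n}
      = (TotZ n).card := by
    rw [Nat.card_congr (Equiv.subtypeEquivRight (fun p => (mem_TotZ n p).symm))]
    rw [Nat.card_eq_fintype_card, Fintype.card_coe]
  rw [hcard]
  have h1 : ((TotZ n).card : ℤ) = ch (n+1) (((n/2:ℕ):ℤ) + 1) := by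
    rw [card_TotZ, sum_zfc]
  have h2 : ch (n+1) (((n/2:ℕ):ℤ) + 1) = ((n+1).choose ((n+1)/2) : ℤ) := by
    unfold ch
    rw [if_pos (by positivity)]
    have ht : (((n/2:ℕ):ℤ) + 1).toNat = n/2 + 1 := by omega
    rw [ht]
    norm_cast
    by_cases hn : n % 2 = 0
    · have h4 := Nat.choose_symm (n := n+1) (k := n/2+1) (by omega)
      have e : (n+1) - (n/2+1) = (n+1)/2 := by omega
      rw [e] at h4
      exact h4.symm
    · have e : n/2 + 1 = (n+1)/2 := by omega
      rw [e]
  have h3 := h1.trans h2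
  exact_mod_cast h3
end

section
/- Every non-empty zigzag knight's path ending on the x-axis decomposes uniquely into exactly one of the three forms: N N̄ β, E Ē β, or N Ē β E N̄ γ, where β and γ are (possibly empty) zigzag knight's paths ending on the x-axis, N=(1,2), N̄=(1,-2), E=(2,1), Ē=(2,-1). -/
open List

/-! ### Auxiliary lemmas -/

/-- partial height after `i` steps -/
def hts (u : List (ℤ × ℤ)) (i : ℕ) : ℤ := ((u.take i).map Prod.snd).sum

lemma hts_succ (u : List (ℤ × ℤ)) (j : ℕ) (hj : j < u.length) :
    hts u (j+1) = hts u j + u[j].2 := by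
  have ht : u.take (j+1) = u.take j ++ [u[j]] := by
    rw [List.take_succ, List.getElem?_eq_getElem hj]; rfl
  simp only [hts, ht, List.map_append, List.sum_append, List.map_cons, List.map_nil,
    List.sum_cons, List.sum_nil, add_zero]

lemma tail2_zzk {a b : ℤ × ℤ} {u : List (ℤ × ℤ)} (hab : a.2 + b.2 = 0)
    (h : IsZigzagKnightPath (a :: b :: u)) : IsZigzagKnightPath u := by
  obtain ⟨⟨⟨hs, hn⟩, hz⟩, hh⟩ := h
  refine ⟨⟨⟨fun s hsm => hs s (by simp [hsm]), fun i => ?_⟩, hz.tail.tail⟩, ?_⟩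
  · have := hn (i+2)
    simp only [List.take_succ_cons, List.map_cons, List.sum_cons] at this
    linarith
  · simp only [pathHeight, List.map_cons, List.sum_cons] at hh ⊢
    linarith

lemma caseNE (u : List (ℤ × ℤ)) (hp : IsZigzagKnightPath (((1:ℤ),(2:ℤ)) :: ((2:ℤ),(-1:ℤ)) :: u)) :
    ∃! βγ : List (ℤ × ℤ) × List (ℤ × ℤ), IsZigzagKnightPath βγ.1 ∧ IsZigzagKnightPath βγ.2 ∧
      u = βγ.1 ++ ((2:ℤ),(1:ℤ)) :: ((1:ℤ),(-2:ℤ)) :: βγ.2 := by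
  classical
  obtain ⟨⟨⟨hsteps, hnn⟩, hzz⟩, hh⟩ := hp
  have hus : ∀ s ∈ u, s ∈ KnightSteps := fun s hs => hsteps s (by simp [hs])
  have hph : (u.map Prod.snd).sum = -1 := by
    simp only [pathHeight, List.map_cons, List.sum_cons] at hh; linarith
  have hlb : ∀ i, -1 ≤ hts u i := by
    intro i
    have := hnn (i+2)
    simp only [List.take_succ_cons, List.map_cons, List.sum_cons] at this
    simp only [hts]; linarith
  have hzu : List.Chain' (fun a b : ℤ × ℤ => a.2 * b.2 < 0) u := hzz.tail.tail
  have hadj : ∀ j (hj : j + 1 < u.length), (u[j]'(by omega)).2 * (u[j+1]'hj).2 < 0 := by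
    intro j hj
    have := List.isChain_iff_getElem.mp hzu j (by omega)
    simpa using this
  have hhead : ∀ h0 : 0 < u.length, 0 < (u[0]'h0).2 := by
    intro h0
    have h := List.isChain_iff_getElem.mp hzz.tail 0 (by simpa using h0)
    simp at h
    omega
  have hex : ∃ n, hts u n = -1 := ⟨u.length, by simpa [hts] using hph⟩
  have hk : hts u (Nat.find hex) = -1 := Nat.find_spec hex
  have hge : ∀ j, hts u j = -1 → Nat.find hex ≤ j := fun j hj => Nat.find_min' hex hj
  have hpos : ∀ j, j < Nat.find hex → 0 ≤ hts u j := by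
    intro j hj
    have h1 := hlb j
    have h2 : hts u j ≠ -1 := Nat.find_min hex hj
    omega
  have hklen : Nat.find hex ≤ u.length := Nat.find_min' hex (by simpa [hts] using hph)
  have hts0 : hts u 0 = 0 := by simp [hts]
  have hk2 : 2 ≤ Nat.find hex := by
    by_contra hcon
    push_neg at hcon
    have h0 : Nat.find hex = 0 ∨ Nat.find hex = 1 := by omega
    rcases h0 with h0 | h0
    · rw [h0, hts0] at hk; omega
    · have hlen : 0 < u.length := by omega
      have hs1 := hts_succ u 0 hlen
      have hhd := hhead hlen
      rw [h0] at hk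
      norm_num at hs1
      omega
  obtain ⟨m, hm⟩ : ∃ m, Nat.find hex = m + 2 := ⟨Nat.find hex - 2, by omega⟩
  rw [hm] at hk hklen
  have hge' : ∀ j, hts u j = -1 → m + 2 ≤ j := fun j hj => by have := hge j hj; omega
  have hpos' : ∀ j, j < m + 2 → 0 ≤ hts u j := fun j hj => hpos j (by omega)
  have hm1len : m + 1 < u.length := by omega
  have hmlen : m < u.length := by omega
  have e2 := hts_succ u (m+1) hm1len
  simp only [show m+1+1 = m+2 from by omega] at e2
  have e1 := hts_succ u m hmlen
  have hSm1pos : 0 ≤ hts u (m+1) := hpos' (m+1) (by omega)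
  have hSmpos : 0 ≤ hts u m := hpos' m (by omega)
  have hub1 : u[m+1]'hm1len ∈ KnightSteps := hus _ (List.getElem_mem _)
  have hub0 : u[m]'hmlen ∈ KnightSteps := hus _ (List.getElem_mem _)
  have hadjm : (u[m]'hmlen).2 * (u[m+1]'hm1len).2 < 0 := hadj m hm1len
  have key : u[m+1]'hm1len = ((1:ℤ),(-2:ℤ)) ∧ u[m]'hmlen = ((2:ℤ),(1:ℤ)) ∧ hts u m = 0 := by
    simp only [KnightSteps, Set.mem_insert_iff, Set.mem_singleton_iff] at hub1 hub0
    have h1 : u[m+1]'hm1len = ((2:ℤ),(-1:ℤ)) ∨ u[m+1]'hm1len = ((1:ℤ),(-2:ℤ)) := by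
      rcases hub1 with h|h|h|h
      · exfalso; rw [h] at e2; norm_num at e2; omega
      · exact Or.inl h
      · exfalso; rw [h] at e2; norm_num at e2; omega
      · exact Or.inr h
    rcases h1 with h|h
    · exfalso
      rw [h] at e2 hadjm
      norm_num at e2 hadjm
      rcases hub0 with h0|h0|h0|h0
      · rw [h0] at e1; norm_num at e1; omega
      · rw [h0] at hadjm; norm_num at hadjm
      · rw [h0] at e1; norm_num at e1; omega
      · rw [h0] at hadjm; norm_num at hadjm
    · rw [h] at e2 hadjm
      norm_num at e2 hadjm
      rcases hub0 with h0|h0|h0|h0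
      · refine ⟨h, h0, ?_⟩; rw [h0] at e1; norm_num at e1; omega
      · exfalso; rw [h0] at hadjm; norm_num at hadjm
      · exfalso; rw [h0] at e1; norm_num at e1; omega
      · exfalso; rw [h0] at hadjm; norm_num at hadjm
  obtain ⟨key1, key0, hSm0⟩ := key
  have hdecomp : u = u.take m ++ ((2:ℤ),(1:ℤ)) :: ((1:ℤ),(-2:ℤ)) :: u.drop (m+2) := by
    conv_lhs => rw [← List.take_append_drop m u]
    congr 1
    rw [List.drop_eq_getElem_cons hmlen, key0]
    congr 1
    rw [List.drop_eq_getElem_cons hm1len, key1]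
  have hβ : IsZigzagKnightPath (u.take m) := by
    refine ⟨⟨⟨fun s hs => hus s (List.mem_of_mem_take hs), fun i => ?_⟩,
        hzu.prefix (List.take_prefix m u)⟩, hSm0⟩
    rw [List.take_take]
    exact hpos' (min i m) (by omega)
  have htadd : ∀ i, hts u (m+2+i) = hts u (m+2) + (((u.drop (m+2)).take i).map Prod.snd).sum := by
    intro i
    simp only [hts, List.take_add, List.map_append, List.sum_append]
  have hγ : IsZigzagKnightPath (u.drop (m+2)) := by
    refine ⟨⟨⟨fun s hs => hus s (List.mem_of_mem_drop hs), fun i => ?_⟩,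
        hzu.suffix (List.drop_suffix _ u)⟩, ?_⟩
    · have := htadd i
      have hl := hlb (m+2+i)
      omega
    · have := htadd u.length
      have : hts u (m+2+u.length) = hts u (m+2) + ((u.drop (m+2)).map Prod.snd).sum := by
        rw [htadd u.length, List.take_of_length_le (by simp)]
      have hfull : hts u (m+2+u.length) = -1 := by
        simp only [hts] at *
        rw [List.take_of_length_le (by omega)]
        exact hph
      show ((u.drop (m+2)).map Prod.snd).sum = 0
      omega
  refine ⟨(u.take m, u.drop (m+2)), ⟨hβ, hγ, hdecomp⟩, ?_⟩
  rintro ⟨β', γ'⟩ ⟨hβ', hγ', heq⟩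
  simp only at heq hβ' hγ' ⊢
  have htakeL : u.take β'.length = β' := by rw [heq]; exact List.take_left ..
  have hdropL : u.drop β'.length = ((2:ℤ),(1:ℤ)) :: ((1:ℤ),(-2:ℤ)) :: γ' := by
    rw [heq]; exact List.drop_left ..
  have hSL : hts u β'.length = 0 := by
    show ((u.take β'.length).map Prod.snd).sum = 0
    rw [htakeL]; exact hβ'.2
  have eL1 : u.take (β'.length + 1) = β' ++ [((2:ℤ),(1:ℤ))] := by
    rw [List.take_add (l := u) (i := β'.length) (j := 1), htakeL, hdropL]; rfl
  have eL2 : u.take (β'.length + 2) = β' ++ [((2:ℤ),(1:ℤ)), ((1:ℤ),(-2:ℤ))] := by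
    rw [List.take_add (l := u) (i := β'.length) (j := 2), htakeL, hdropL]; rfl
  have hSL1 : hts u (β'.length + 1) = 1 := by
    show ((u.take (β'.length + 1)).map Prod.snd).sum = 1
    rw [eL1]; simp
    have := hβ'.2
    simp only [pathHeight] at this
    omega
  have hSL2 : hts u (β'.length + 2) = -1 := by
    show ((u.take (β'.length + 2)).map Prod.snd).sum = -1
    rw [eL2]; simp
    have := hβ'.2
    simp only [pathHeight] at this
    omega
  have h1 : m + 2 ≤ β'.length + 2 := hge' _ hSL2
  have h2 : β'.length ≤ m := by
    by_contra hcon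
    push_neg at hcon
    -- then m + 2 ≤ β'.length + 1, so hts u (m+2) ≥ 0, contradiction with hk
    rcases Nat.lt_or_ge (m+2) (β'.length + 1) with hlt | hge2
    · -- m + 2 ≤ β'.length
      have hle : m + 2 ≤ β'.length := by omega
      have : hts u (m+2) = ((β'.take (m+2)).map Prod.snd).sum := by
        show ((u.take (m+2)).map Prod.snd).sum = _
        rw [heq, List.take_append_of_le_length hle]
      have hb := hβ'.1.1.2 (m+2)
      omega
    · have : m + 2 = β'.length + 1 := by omega
      rw [this] at hk
      omega
  have hLm : β'.length = m := by omega
  have hbeq : β' = u.take m := by rw [← hLm, htakeL]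
  have hgeq : γ' = u.drop (m+2) := by
    have : u.drop (m+2) = γ' := by
      rw [heq, show β' ++ ((2:ℤ),(1:ℤ)) :: ((1:ℤ),(-2:ℤ)) :: γ'
            = (β' ++ [((2:ℤ),(1:ℤ)), ((1:ℤ),(-2:ℤ))]) ++ γ' by simp]
      rw [List.drop_left' (by simp [hLm])]
    exact this.symm
  exact Prod.ext hbeq hgeq

/-- every non-empty zigzag knight's path ending on the x-axis
decomposes uniquely into exactly one of the forms N N̄ β, E Ē β, N Ē β E N̄ γ
with β, γ zigzag knight's paths ending on the x-axis. -/
theorem stmt6 (p : List (ℤ × ℤ)) (hp : IsZigzagKnightPath p) (hne : p ≠ []) :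
    ((∃! β, IsZigzagKnightPath β ∧ p = Nstep :: Nbar :: β) ∧
      ¬ (∃ β, IsZigzagKnightPath β ∧ p = Estep :: Ebar :: β) ∧
      ¬ (∃ βγ : List (ℤ × ℤ) × List (ℤ × ℤ), IsZigzagKnightPath βγ.1 ∧
            IsZigzagKnightPath βγ.2 ∧ p = Nstep :: Ebar :: (βγ.1 ++ Estep :: Nbar :: βγ.2)))
    ∨
    ((∃! β, IsZigzagKnightPath β ∧ p = Estep :: Ebar :: β) ∧
      ¬ (∃ β, IsZigzagKnightPath β ∧ p = Nstep :: Nbar :: β) ∧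
      ¬ (∃ βγ : List (ℤ × ℤ) × List (ℤ × ℤ), IsZigzagKnightPath βγ.1 ∧
            IsZigzagKnightPath βγ.2 ∧ p = Nstep :: Ebar :: (βγ.1 ++ Estep :: Nbar :: βγ.2)))
    ∨
    ((∃! βγ : List (ℤ × ℤ) × List (ℤ × ℤ), IsZigzagKnightPath βγ.1 ∧
          IsZigzagKnightPath βγ.2 ∧ p = Nstep :: Ebar :: (βγ.1 ++ Estep :: Nbar :: βγ.2)) ∧
      ¬ (∃ β, IsZigzagKnightPath β ∧ p = Nstep :: Nbar :: β) ∧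
      ¬ (∃ β, IsZigzagKnightPath β ∧ p = Estep :: Ebar :: β)) := by
  obtain ⟨⟨⟨hsteps, hnn⟩, hzz⟩, hh⟩ := hp
  match p, hne with
  | [a], _ =>
    exfalso
    have ha : a ∈ KnightSteps := hsteps a (by simp)
    simp only [pathHeight, List.map_cons, List.map_nil, List.sum_cons, List.sum_nil] at hh
    simp only [KnightSteps, Set.mem_insert_iff, Set.mem_singleton_iff] at ha
    rcases ha with rfl|rfl|rfl|rfl <;> simp at hh
  | a :: b :: u, _ =>
    have ha : a ∈ KnightSteps := hsteps a (by simp)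
    have hb : b ∈ KnightSteps := hsteps b (by simp)
    have hab : a.2 * b.2 < 0 := (List.isChain_cons_cons.mp hzz).1
    have ha2 : 0 ≤ a.2 := by
      have := hnn 1
      simpa using this
    have hb2 : b.2 < 0 := by
      rcases lt_trichotomy b.2 0 with h|h|h
      · exact h
      · exfalso; rw [h] at hab; simp at hab
      · exfalso; nlinarith
    have hab2 : 0 ≤ a.2 + b.2 := by
      have := hnn 2
      simpa using this
    have hpfull : IsZigzagKnightPath (a :: b :: u) := ⟨⟨⟨hsteps, hnn⟩, hzz⟩, hh⟩
    simp only [KnightSteps, Set.mem_insert_iff, Set.mem_singleton_iff] at ha hb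
    rcases ha with rfl|rfl|rfl|rfl
    · -- a = (2,1) = E
      -- b must be (2,-1)
      rcases hb with rfl|rfl|rfl|rfl
      · simp at hab
      · -- E Ē case
        refine Or.inr (Or.inl ⟨⟨u, ⟨tail2_zzk (by norm_num) hpfull, rfl⟩, ?_⟩, ?_, ?_⟩)
        · rintro y ⟨-, hy⟩
          simp only [Estep, Ebar, List.cons.injEq] at hy
          exact hy.2.2.symm
        · rintro ⟨β, -, hB⟩
          simp [Nstep, Nbar] at hB
        · rintro ⟨βγ, -, -, hB⟩
          simp [Nstep, Ebar] at hB
      · simp at hab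
      · simp at hab2
    · simp at ha2
    · -- a = (1,2) = N
      rcases hb with rfl|rfl|rfl|rfl
      · simp at hab
      · -- N Ē case: the hard one
        have hu := caseNE u hpfull
        refine Or.inr (Or.inr ⟨?_, ?_, ?_⟩)
        · obtain ⟨βγ, ⟨h1, h2, h3⟩, huniq⟩ := hu
          refine ⟨βγ, ⟨h1, h2, ?_⟩, ?_⟩
          · simp only [Nstep, Ebar, Estep, Nbar]
            rw [h3]
          · rintro y ⟨hy1, hy2, hy3⟩
            refine huniq y ⟨hy1, hy2, ?_⟩
            simp only [Nstep, Ebar, Estep, Nbar, List.cons.injEq, true_and] at hy3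
            exact hy3
        · rintro ⟨β, -, hB⟩
          simp [Nstep, Nbar] at hB
        · rintro ⟨β, -, hB⟩
          simp [Estep, Ebar] at hB
      · simp at hab
      · -- N N̄ case
        refine Or.inl ⟨⟨u, ⟨tail2_zzk (by norm_num) hpfull, rfl⟩, ?_⟩, ?_, ?_⟩
        · rintro y ⟨-, hy⟩
          simp only [Nstep, Nbar, List.cons.injEq] at hy
          exact hy.2.2.symm
        · rintro ⟨β, -, hB⟩
          simp [Estep, Ebar] at hB
        · rintro ⟨βγ, -, -, hB⟩
          simp [Nstep, Ebar] at hB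
    · simp at ha2
end

section
/- For every n ≥ 0, the set of zigzag knight's paths of size 2n ending on the x-axis is in bijection with the set of peakless Motzkin paths of length n+1. Explicitly, the map ψ defined recursively by ψ(ε)=F, ψ(E Ē β)=U ψ(β) D, ψ(N N̄ β)=F ψ(β), and ψ(N Ē β E N̄ γ)=U ψ(β) D ψ(γ) is such a bijection. -/
open List

/-- A peakless Motzkin path, encoded as a list of steps `1 = U`, `-1 = D`, `0 = F`
with nonnegative partial sums, ending at height 0, and with no factor `UD`. -/
def IsPeaklessMotzkin (m : List ℤ) : Prop :=
  (∀ x ∈ m, x = 1 ∨ x = -1 ∨ x = 0) ∧ (∀ i, 0 ≤ (m.take i).sum) ∧ m.sum = 0 ∧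
    List.Chain' (fun a b => ¬ (a = 1 ∧ b = -1)) m

namespace Stmt8Aux

def hsum (p : List (ℤ × ℤ)) : ℤ := (p.map Prod.snd).sum

@[simp] lemma hsum_nil : hsum [] = 0 := rfl
@[simp] lemma hsum_cons (a : ℤ × ℤ) (p : List (ℤ × ℤ)) : hsum (a :: p) = a.2 + hsum p := by
  simp [hsum]
@[simp] lemma hsum_append (p q : List (ℤ × ℤ)) : hsum (p ++ q) = hsum p + hsum q := by
  simp [hsum]

lemma zkp_iff (p : List (ℤ × ℤ)) : IsZigzagKnightPath p ↔
    (∀ s ∈ p, s ∈ KnightSteps) ∧ (∀ i, 0 ≤ hsum (p.take i)) ∧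
      Chain' (fun a b : ℤ × ℤ => a.2 * b.2 < 0) p ∧ hsum p = 0 := by
  unfold IsZigzagKnightPath IsPartialZigzag IsPartialKnight NonnegHeights IsZigzag pathHeight hsum
  tauto

lemma knight_cases {s : ℤ × ℤ} (h : s ∈ KnightSteps) :
    s = Estep ∨ s = Ebar ∨ s = Nstep ∨ s = Nbar := by
  simpa [KnightSteps, Estep, Ebar, Nstep, Nbar] using h

lemma knight_snd_ne {s : ℤ × ℤ} (h : s ∈ KnightSteps) : s.2 ≠ 0 := by
  rcases knight_cases h with rfl | rfl | rfl | rfl <;> simp [Estep, Ebar, Nstep, Nbar]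

lemma head_up {s : ℤ × ℤ} {p : List (ℤ × ℤ)} (h : IsZigzagKnightPath (s :: p)) : 0 < s.2 := by
  obtain ⟨hmem, hnn, _, _⟩ := (zkp_iff _).1 h
  have h1 := hnn 1
  simp only [take_succ_cons, take_zero] at h1
  have := knight_snd_ne (hmem s (by simp))
  simp at h1
  omega

lemma head?_up {p : List (ℤ × ℤ)} (h : IsZigzagKnightPath p) : ∀ s ∈ p.head?, 0 < s.2 := by
  cases p with
  | nil => simp
  | cons a q => simpa using head_up h

lemma getLast?_down {p : List (ℤ × ℤ)} (h : IsZigzagKnightPath p) : ∀ s ∈ p.getLast?, s.2 < 0 := by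
  obtain rfl | ⟨q, t, rfl⟩ := p.eq_nil_or_concat'
  · simp
  · intro s hs
    rw [List.getLast?_concat] at hs
    have hs' : t = s := by simpa using hs
    rw [← hs']
    obtain ⟨hmem, hnn, _, hsum0⟩ := (zkp_iff _).1 h
    have h2 : hsum q + t.2 = 0 := by simpa using hsum0
    have h3 : 0 ≤ hsum q := by
      have := hnn q.length
      rwa [List.take_left] at this
    have h4 : t.2 ≠ 0 := knight_snd_ne (hmem t (by simp))
    omega

@[simp] lemma pathSize_nil : pathSize [] = 0 := rfl
@[simp] lemma pathSize_cons (a : ℤ × ℤ) (p : List (ℤ × ℤ)) :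
    pathSize (a :: p) = a.1 + pathSize p := by simp [pathSize]
@[simp] lemma pathSize_append (p q : List (ℤ × ℤ)) :
    pathSize (p ++ q) = pathSize p + pathSize q := by simp [pathSize]

lemma pathSize_nonneg {p : List (ℤ × ℤ)} (h : ∀ s ∈ p, s ∈ KnightSteps) :
    0 ≤ pathSize p := by
  induction p with
  | nil => simp
  | cons a q ih =>
    have ha := h a (by simp)
    have h1 : 0 ≤ a.1 := by
      rcases knight_cases ha with rfl | rfl | rfl | rfl <;> simp [Estep, Ebar, Nstep, Nbar]
    have := ih (fun s hs => h s (by simp [hs]))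
    simp; omega

lemma Emem : Estep ∈ KnightSteps := by simp [KnightSteps, Estep]
lemma Ebmem : Ebar ∈ KnightSteps := by simp [KnightSteps, Ebar]
lemma Nmem : Nstep ∈ KnightSteps := by simp [KnightSteps, Nstep]
lemma Nbmem : Nbar ∈ KnightSteps := by simp [KnightSteps, Nbar]

lemma zkp_EE {β : List (ℤ × ℤ)} (h : IsZigzagKnightPath β) :
    IsZigzagKnightPath (Estep :: Ebar :: β) := by
  obtain ⟨hmem, hnn, hch, hs⟩ := (zkp_iff _).1 h
  refine (zkp_iff _).2 ⟨?_, ?_, ?_, ?_⟩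
  · intro s hs
    simp only [List.mem_cons] at hs
    rcases hs with rfl | rfl | h
    · exact Emem
    · exact Ebmem
    · exact hmem _ h
  · intro i
    match i with
    | 0 => simp
    | 1 => simp [Estep]
    | (j+2) =>
      have := hnn j
      simp only [take_succ_cons, hsum_cons, Estep, Ebar]
      omega
  · refine List.isChain_cons.2 ⟨?_, List.isChain_cons.2 ⟨?_, hch⟩⟩
    · intro y hy
      simp at hy
      subst hy
      norm_num [Estep, Ebar]
    · intro y hy
      have := head?_up h y hy
      simp [Ebar]
      omega
  · simp [Estep, Ebar]
    omega

lemma zkp_NN {β : List (ℤ × ℤ)} (h : IsZigzagKnightPath β) :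
    IsZigzagKnightPath (Nstep :: Nbar :: β) := by
  obtain ⟨hmem, hnn, hch, hs⟩ := (zkp_iff _).1 h
  refine (zkp_iff _).2 ⟨?_, ?_, ?_, ?_⟩
  · intro s hs
    simp only [List.mem_cons] at hs
    rcases hs with rfl | rfl | h
    · exact Nmem
    · exact Nbmem
    · exact hmem _ h
  · intro i
    match i with
    | 0 => simp
    | 1 => simp [Nstep]
    | (j+2) =>
      have := hnn j
      simp only [take_succ_cons, hsum_cons, Nstep, Nbar]
      omega
  · refine List.isChain_cons.2 ⟨?_, List.isChain_cons.2 ⟨?_, hch⟩⟩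
    · intro y hy
      simp at hy
      subst hy
      norm_num [Nstep, Nbar]
    · intro y hy
      have := head?_up h y hy
      simp [Nbar]
      omega
  · simp [Nstep, Nbar]
    omega

lemma ENb_take {γ : List (ℤ × ℤ)} (hγ : ∀ i, 0 ≤ hsum (γ.take i)) (l : ℕ) :
    -1 ≤ hsum ((Estep :: Nbar :: γ).take l) := by
  match l with
  | 0 => simp
  | 1 => simp [Estep]
  | (j+2) =>
    have := hγ j
    simp only [take_succ_cons, hsum_cons, Estep, Nbar]
    omega

lemma zkp_NE {β γ : List (ℤ × ℤ)} (hβ : IsZigzagKnightPath β) (hγ : IsZigzagKnightPath γ) :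
    IsZigzagKnightPath (Nstep :: Ebar :: (β ++ Estep :: Nbar :: γ)) := by
  obtain ⟨hmemβ, hnnβ, hchβ, hsβ⟩ := (zkp_iff _).1 hβ
  obtain ⟨hmemγ, hnnγ, hchγ, hsγ⟩ := (zkp_iff _).1 hγ
  refine (zkp_iff _).2 ⟨?_, ?_, ?_, ?_⟩
  · intro s hs
    simp only [List.mem_cons, List.mem_append] at hs
    rcases hs with rfl | rfl | h | rfl | rfl | h
    · exact Nmem
    · exact Ebmem
    · exact hmemβ _ h
    · exact Emem
    · exact Nbmem
    · exact hmemγ _ h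
  · intro i
    match i with
    | 0 => simp
    | 1 => simp [Nstep]
    | (j+2) =>
      have h1 := hnnβ j
      have h2 := ENb_take hnnγ (j - β.length)
      simp only [take_succ_cons, hsum_cons, Nstep, Ebar,
        List.take_append, hsum_append]
      omega
  · refine List.isChain_cons.2 ⟨?_, List.isChain_cons.2 ⟨?_, ?_⟩⟩
    · intro y hy
      simp at hy
      subst hy
      norm_num [Nstep, Ebar]
    · intro y hy
      rcases List.eq_nil_or_concat' β with rfl | ⟨q, t, rfl⟩
      · simp at hy
        subst hy
        norm_num [Ebar, Estep]
      · rw [List.head?_append_of_ne_nil _ (by simp)] at hy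
        have := head?_up hβ y hy
        simp [Ebar]
        omega
    · refine List.isChain_append.2 ⟨hchβ, ?_, ?_⟩
      · refine List.isChain_cons.2 ⟨?_, List.isChain_cons.2 ⟨?_, hchγ⟩⟩
        · intro y hy
          simp at hy
          subst hy
          norm_num [Estep, Nbar]
        · intro y hy
          have := head?_up hγ y hy
          simp [Nbar]
          omega
      · intro x hx y hy
        have hx2 := getLast?_down hβ x hx
        simp at hy
        subst hy
        simp [Estep]
        omega
  · simp [Nstep, Ebar, Estep, Nbar]
    omega

lemma knight_snd {s : ℤ × ℤ} (h : s ∈ KnightSteps) :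
    s.2 = 1 ∨ s.2 = -1 ∨ s.2 = 2 ∨ s.2 = -2 := by
  rcases knight_cases h with rfl | rfl | rfl | rfl <;> simp [Estep, Ebar, Nstep, Nbar]

lemma eq_Estep {s : ℤ × ℤ} (h : s ∈ KnightSteps) (h2 : s.2 = 1) : s = Estep := by
  rcases knight_cases h with rfl | rfl | rfl | rfl <;> first
    | rfl
    | (exfalso; simp [Estep, Ebar, Nstep, Nbar] at h2)

lemma eq_Ebar {s : ℤ × ℤ} (h : s ∈ KnightSteps) (h2 : s.2 = -1) : s = Ebar := by
  rcases knight_cases h with rfl | rfl | rfl | rfl <;> first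
    | rfl
    | (exfalso; simp [Estep, Ebar, Nstep, Nbar] at h2)

lemma eq_Nstep {s : ℤ × ℤ} (h : s ∈ KnightSteps) (h2 : s.2 = 2) : s = Nstep := by
  rcases knight_cases h with rfl | rfl | rfl | rfl <;> first
    | rfl
    | (exfalso; simp [Estep, Ebar, Nstep, Nbar] at h2)

lemma eq_Nbar {s : ℤ × ℤ} (h : s ∈ KnightSteps) (h2 : s.2 = -2) : s = Nbar := by
  rcases knight_cases h with rfl | rfl | rfl | rfl <;> first
    | rfl
    | (exfalso; simp [Estep, Ebar, Nstep, Nbar] at h2)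

lemma zkp_decomp {p : List (ℤ × ℤ)} (hp : IsZigzagKnightPath p) (hne : p ≠ []) :
    (∃ β, p = Estep :: Ebar :: β ∧ IsZigzagKnightPath β) ∨
    (∃ β, p = Nstep :: Nbar :: β ∧ IsZigzagKnightPath β) ∨
    (∃ β γ, p = Nstep :: Ebar :: (β ++ Estep :: Nbar :: γ) ∧
      IsZigzagKnightPath β ∧ IsZigzagKnightPath γ) := by
  obtain ⟨hmem, hnn, hch, hsum0⟩ := (zkp_iff _).1 hp
  obtain ⟨s, q, rfl⟩ : ∃ s q, p = s :: q := by
    cases p with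
    | nil => exact absurd rfl hne
    | cons a q => exact ⟨a, q, rfl⟩
  have hs_up : 0 < s.2 := head_up hp
  obtain ⟨t, r, rfl⟩ : ∃ t r, q = t :: r := by
    cases q with
    | nil =>
      exfalso
      have : s.2 = 0 := by simpa using hsum0
      exact knight_snd_ne (hmem s (by simp)) this
    | cons t r => exact ⟨t, r, rfl⟩
  have hst : s.2 * t.2 < 0 := (List.isChain_cons_cons.1 hch).1
  have ht_dn : t.2 < 0 := by nlinarith
  have hmem_r : ∀ x ∈ r, x ∈ KnightSteps := fun x hx => hmem x (by simp [hx])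
  have hch_r : Chain' (fun a b : ℤ × ℤ => a.2 * b.2 < 0) r := (hch.tail).tail
  have hch_tr : Chain' (fun a b : ℤ × ℤ => a.2 * b.2 < 0) (t :: r) := hch.tail
  have hnn2 : ∀ i, 0 ≤ s.2 + t.2 + hsum (r.take i) := by
    intro i
    have := hnn (i + 2)
    simpa [add_assoc] using this
  have hsum_r : s.2 + t.2 + hsum r = 0 := by simpa [add_assoc] using hsum0
  have hs_cases := knight_snd (hmem s (by simp))
  have ht_cases := knight_snd (hmem t (by simp))
  have hsmem := hmem s (by simp)
  have htmem := hmem t (by simp)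
  rcases hs_cases with hs1 | hs1 | hs1 | hs1 <;> try omega
  · -- s.2 = 1 : s = Estep
    have hsE : s = Estep := eq_Estep hsmem hs1
    rcases ht_cases with ht1 | ht1 | ht1 | ht1 <;> try omega
    · -- t = Ebar
      left
      refine ⟨r, by rw [hsE, eq_Ebar htmem ht1], (zkp_iff _).2 ⟨hmem_r, ?_, hch_r, by omega⟩⟩
      intro i
      have := hnn2 i
      omega
    · -- t.2 = -2 : impossible, height -1 after two steps
      exfalso
      have := hnn2 0
      simp at this
      omega
  · -- s.2 = 2 : s = Nstep
    have hsN : s = Nstep := eq_Nstep hsmem hs1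
    rcases ht_cases with ht1 | ht1 | ht1 | ht1 <;> try omega
    · -- t = Ebar : the interesting case
      right; right
      have htE : t = Ebar := eq_Ebar htmem ht1
      have hr_pre : ∀ i, -1 ≤ hsum (r.take i) := by
        intro i
        have := hnn2 i
        omega
      have hr_sum : hsum r = -1 := by omega
      have hPex : ∃ n, hsum (r.take n) = -1 := ⟨r.length, by simpa using hr_sum⟩
      have hnot01 : ∀ k, hsum (r.take k) = -1 → 2 ≤ k := by
        intro k hk
        match k with
        | 0 => simp at hk
        | 1 =>
          exfalso
          cases r with
          | nil => simp at hk
          | cons a r' =>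
            have hta : t.2 * a.2 < 0 := (List.isChain_cons_cons.1 hch_tr).1
            have ha_up : 0 < a.2 := by nlinarith
            simp at hk
            omega
        | (n+2) => omega
      obtain ⟨k, hk, hklen, hjge, hk2⟩ :
          ∃ k, hsum (r.take k) = -1 ∧ k ≤ r.length ∧
            (∀ j < k, 0 ≤ hsum (r.take j)) ∧ 2 ≤ k := by
        refine ⟨Nat.find hPex, Nat.find_spec hPex,
          Nat.find_min' hPex (by simpa using hr_sum), ?_,
          hnot01 _ (Nat.find_spec hPex)⟩
        intro j hj
        have h1 := Nat.find_min hPex hj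
        have h2 := hr_pre j
        omega
      obtain ⟨k2, rfl⟩ : ∃ k2, k = k2 + 2 := ⟨k - 2, by omega⟩
      have hik2 : k2 < r.length := by omega
      have hik1 : k2 + 1 < r.length := by omega
      have hamem : r[k2]'hik2 ∈ KnightSteps := hmem_r _ (List.getElem_mem hik2)
      have hbmem : r[k2+1]'hik1 ∈ KnightSteps := hmem_r _ (List.getElem_mem hik1)
      have htk1 : r.take (k2 + 1) = r.take k2 ++ [r[k2]'hik2] := by
        rw [List.take_succ, List.getElem?_eq_getElem hik2]
        rfl
      have htk2 : r.take (k2 + 2) = r.take (k2 + 1) ++ [r[k2+1]'hik1] := by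
        rw [show k2 + 2 = (k2 + 1) + 1 from rfl, List.take_succ,
          List.getElem?_eq_getElem hik1]
        rfl
      have hs0 : 0 ≤ hsum (r.take k2) := hjge k2 (by omega)
      have hs1' : 0 ≤ hsum (r.take (k2+1)) := hjge (k2+1) (by omega)
      have hEq1 : hsum (r.take (k2+1)) = hsum (r.take k2) + (r[k2]'hik2).2 := by
        rw [htk1, hsum_append]; simp [hsum]
      have hEq2 : hsum (r.take (k2+2)) = hsum (r.take (k2+1)) + (r[k2+1]'hik1).2 := by
        rw [htk2, hsum_append]; simp [hsum]
      have hab : (r[k2]'hik2).2 * (r[k2+1]'hik1).2 < 0 := by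
        have := List.isChain_iff_getElem.1 hch_r k2 (by omega)
        simpa using this
      have hb_cases := knight_snd hbmem
      have ha_cases := knight_snd hamem
      have hbv : (r[k2+1]'hik1).2 = -2 := by
        rcases hb_cases with h | h | h | h <;> try omega
        -- b.2 = -1 : contradiction via a up
        exfalso
        have ha_up : 0 < (r[k2]'hik2).2 := by nlinarith
        omega
      have hav : (r[k2]'hik2).2 = 1 := by
        have ha_up : 0 < (r[k2]'hik2).2 := by nlinarith
        rcases ha_cases with h | h | h | h <;> omega
      have haE : r[k2]'hik2 = Estep := eq_Estep hamem hav
      have hbN : r[k2+1]'hik1 = Nbar := eq_Nbar hbmem hbv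
      have hs0' : hsum (r.take k2) = 0 := by omega
      have hdrop : r.drop k2 = Estep :: Nbar :: r.drop (k2+2) := by
        rw [List.drop_eq_getElem_cons hik2, List.drop_eq_getElem_cons hik1, haE, hbN]
      have hrEq : r = r.take k2 ++ Estep :: Nbar :: r.drop (k2+2) := by
        conv_lhs => rw [← List.take_append_drop k2 r, hdrop]
      refine ⟨r.take k2, r.drop (k2+2), ?_, ?_, ?_⟩
      · rw [hsN, htE, ← hrEq]
      · refine (zkp_iff _).2 ⟨fun x hx => hmem_r x (List.take_subset _ _ hx), ?_, ?_, hs0'⟩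
        · intro i
          rw [List.take_take]
          rcases Nat.le_total i k2 with h | h
          · rw [min_eq_left h]
            rcases Nat.lt_or_ge i (k2+2) with h' | h'
            · exact hjge i (by omega)
            · omega
          · rw [min_eq_right h]
            omega
        · exact hch_r.infix (List.take_prefix _ _).isInfix
      · refine (zkp_iff _).2 ⟨fun x hx => hmem_r x (List.drop_subset _ _ hx), ?_, ?_, ?_⟩
        · intro i
          have := hr_pre (k2 + 2 + i)
          rw [List.take_add] at this
          simp only [hsum_append] at this
          omega
        · exact hch_r.infix (List.drop_suffix _ _).isInfix
        · have := List.take_append_drop (k2+2) r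
          have h2 := congrArg hsum this
          simp only [hsum_append] at h2
          omega
    · -- t = Nbar
      right; left
      refine ⟨r, by rw [hsN, eq_Nbar htmem ht1], (zkp_iff _).2 ⟨hmem_r, ?_, hch_r, by omega⟩⟩
      intro i
      have := hnn2 i
      omega

lemma zkp_nil : IsZigzagKnightPath ([] : List (ℤ × ℤ)) := by
  refine (zkp_iff _).2 ⟨by simp, by simp, List.isChain_nil, by simp⟩

lemma motz_nil : IsPeaklessMotzkin [] := ⟨by simp, by simp, by simp, List.isChain_nil⟩

lemma motz_F : IsPeaklessMotzkin [0] := by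
  refine ⟨by simp, ?_, by simp, List.isChain_singleton _⟩
  intro i
  match i with
  | 0 => simp
  | (j+1) => simp

lemma motz_head {m : List ℤ} (h : IsPeaklessMotzkin m) : ∀ x ∈ m.head?, x ≠ -1 := by
  obtain ⟨helem, hpre, hsum, hch⟩ := h
  cases m with
  | nil => simp
  | cons c t =>
    intro x hx
    obtain rfl : c = x := by simpa using hx
    have := hpre 1
    simp at this
    omega

lemma motz_last {m : List ℤ} (h : IsPeaklessMotzkin m) : ∀ x ∈ m.getLast?, x ≠ 1 := by
  obtain ⟨helem, hpre, hsum, hch⟩ := h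
  obtain rfl | ⟨q, t, rfl⟩ := m.eq_nil_or_concat'
  · simp
  · intro x hx
    have hx' : t = x := by simpa [List.getLast?_concat] using hx
    rw [← hx']
    have h2 : q.sum + t = 0 := by simpa using hsum
    have h3 : 0 ≤ q.sum := by
      have := hpre q.length
      rwa [List.take_left] at this
    omega

lemma motz_cons0 {m : List ℤ} (h : IsPeaklessMotzkin m) : IsPeaklessMotzkin (0 :: m) := by
  obtain ⟨helem, hpre, hsum, hch⟩ := h
  refine ⟨?_, ?_, by simpa using hsum, ?_⟩
  · intro x hx
    rcases List.mem_cons.1 hx with rfl | hx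
    · tauto
    · exact helem x hx
  · intro i
    match i with
    | 0 => simp
    | (j+1) =>
      have := hpre j
      simp only [take_succ_cons, List.sum_cons]
      omega
  · exact List.isChain_cons.2 ⟨fun y _ => by simp, hch⟩

lemma neg1_take {w : List ℤ} (hw : ∀ i, 0 ≤ (w.take i).sum) (j : ℕ) :
    -1 ≤ ((-1 :: w).take j).sum := by
  match j with
  | 0 => simp
  | (i+1) =>
    have := hw i
    simp only [take_succ_cons, List.sum_cons]
    omega

lemma motz_UDW {m w : List ℤ} (hm : IsPeaklessMotzkin m) (hw : IsPeaklessMotzkin w)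
    (hmne : m ≠ []) : IsPeaklessMotzkin (1 :: (m ++ -1 :: w)) := by
  obtain ⟨helem, hpre, hsum, hch⟩ := hm
  obtain ⟨helem', hpre', hsum', hch'⟩ := hw
  refine ⟨?_, ?_, ?_, ?_⟩
  · intro x hx
    simp only [List.mem_cons, List.mem_append] at hx
    rcases hx with rfl | h | rfl | h
    · tauto
    · exact helem x h
    · tauto
    · exact helem' x h
  · intro i
    match i with
    | 0 => simp
    | (j+1) =>
      have h1 := hpre j
      have h2 := neg1_take hpre' (j - m.length)
      simp only [take_succ_cons, List.sum_cons, List.take_append,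
        List.sum_append]
      omega
  · simp only [List.sum_cons, List.sum_append]
    omega
  · refine List.isChain_cons.2 ⟨?_, ?_⟩
    · intro y hy
      rw [List.head?_append_of_ne_nil _ hmne] at hy
      have := motz_head ⟨helem, hpre, hsum, hch⟩ y hy
      tauto
    · refine List.isChain_append.2 ⟨hch, ?_, ?_⟩
      · refine List.isChain_cons.2 ⟨fun y _ => by simp, hch'⟩
      · intro x hx y hy
        have := motz_last ⟨helem, hpre, hsum, hch⟩ x hx
        tauto

lemma psi_good (ψ : List (ℤ × ℤ) → List ℤ)
    (h0 : ψ [] = [0])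
    (h1 : ∀ β, IsZigzagKnightPath β → ψ (Estep :: Ebar :: β) = 1 :: (ψ β ++ [-1]))
    (h2 : ∀ β, IsZigzagKnightPath β → ψ (Nstep :: Nbar :: β) = 0 :: ψ β)
    (h3 : ∀ β γ, IsZigzagKnightPath β → IsZigzagKnightPath γ →
        ψ (Nstep :: Ebar :: (β ++ Estep :: Nbar :: γ)) = 1 :: (ψ β ++ -1 :: ψ γ)) :
    ∀ p, IsZigzagKnightPath p →
      IsPeaklessMotzkin (ψ p) ∧ ((ψ p).length : ℤ) * 2 = pathSize p + 2 := by
  suffices H : ∀ n p, p.length = n → IsZigzagKnightPath p →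
      IsPeaklessMotzkin (ψ p) ∧ ((ψ p).length : ℤ) * 2 = pathSize p + 2 by
    exact fun p hp => H p.length p rfl hp
  intro n
  induction n using Nat.strong_induction_on with
  | _ n ih =>
    intro p hlen hp
    rcases eq_or_ne p [] with rfl | hne
    · rw [h0]
      exact ⟨motz_F, by simp⟩
    · rcases zkp_decomp hp hne with ⟨β, rfl, hβ⟩ | ⟨β, rfl, hβ⟩ | ⟨β, γ, rfl, hβ, hγ⟩
      · obtain ⟨hMβ, hLβ⟩ := ih β.length (by simp [← hlen]) β rfl hβ
        have hsβ : 0 ≤ pathSize β := pathSize_nonneg ((zkp_iff _).1 hβ).1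
        have hψβne : ψ β ≠ [] := by
          intro h
          rw [h] at hLβ
          simp only [List.length_nil, Nat.cast_zero, zero_mul] at hLβ
          omega
        rw [h1 β hβ]
        constructor
        · exact motz_UDW hMβ motz_nil hψβne
        · simp only [List.length_cons, List.length_append, List.length_nil,
            pathSize_cons, Estep, Ebar]
          push_cast
          omega
      · obtain ⟨hMβ, hLβ⟩ := ih β.length (by simp [← hlen]) β rfl hβ
        rw [h2 β hβ]
        constructor
        · exact motz_cons0 hMβ
        · simp only [List.length_cons, pathSize_cons, Nstep, Nbar]
          push_cast
          omega
      · obtain ⟨hMβ, hLβ⟩ := ih β.length (by simp [← hlen]; omega) β rfl hβ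
        obtain ⟨hMγ, hLγ⟩ := ih γ.length (by simp [← hlen]; omega) γ rfl hγ
        have hsβ : 0 ≤ pathSize β := pathSize_nonneg ((zkp_iff _).1 hβ).1
        have hψβne : ψ β ≠ [] := by
          intro h
          rw [h] at hLβ
          simp only [List.length_nil, Nat.cast_zero, zero_mul] at hLβ
          omega
        rw [h3 β γ hβ hγ]
        constructor
        · exact motz_UDW hMβ hMγ hψβne
        · simp only [List.length_cons, List.length_append, List.length_nil, pathSize_cons,
            pathSize_append, Nstep, Ebar, Estep, Nbar]
          push_cast
          omega

lemma depair_aux {M M' w w' : List ℤ}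
    (hMs : M.sum = 0) (hM' : ∀ i, 0 ≤ (M'.take i).sum)
    (h : M ++ -1 :: w = M' ++ -1 :: w') (hl : M.length < M'.length) : False := by
  have hs := congrArg (fun l => (List.take (M.length + 1) l).sum) h
  simp only [List.take_append, List.sum_append] at hs
  rw [List.take_of_length_le (by omega), Nat.add_sub_cancel_left,
    show M.length + 1 - M'.length = 0 by omega] at hs
  simp [hMs] at hs
  have := hM' (M.length + 1)
  omega

lemma depair {M M' w w' : List ℤ}
    (hMs : M.sum = 0) (hM' : ∀ i, 0 ≤ (M'.take i).sum)
    (hMs' : M'.sum = 0) (hM : ∀ i, 0 ≤ (M.take i).sum)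
    (h : M ++ -1 :: w = M' ++ -1 :: w') : M = M' ∧ w = w' := by
  have hlen : M.length = M'.length := by
    rcases Nat.lt_trichotomy M.length M'.length with hl | hl | hl
    · exact absurd (depair_aux hMs hM' h hl) not_false
    · exact hl
    · exact absurd (depair_aux hMs' hM h.symm hl) not_false
  obtain ⟨hM, ht⟩ := List.append_inj h hlen
  exact ⟨hM, by simpa using ht⟩

lemma psi_inj (ψ : List (ℤ × ℤ) → List ℤ)
    (h0 : ψ [] = [0])
    (h1 : ∀ β, IsZigzagKnightPath β → ψ (Estep :: Ebar :: β) = 1 :: (ψ β ++ [-1]))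
    (h2 : ∀ β, IsZigzagKnightPath β → ψ (Nstep :: Nbar :: β) = 0 :: ψ β)
    (h3 : ∀ β γ, IsZigzagKnightPath β → IsZigzagKnightPath γ →
        ψ (Nstep :: Ebar :: (β ++ Estep :: Nbar :: γ)) = 1 :: (ψ β ++ -1 :: ψ γ)) :
    ∀ p q, IsZigzagKnightPath p → IsZigzagKnightPath q → ψ p = ψ q → p = q := by
  have good := psi_good ψ h0 h1 h2 h3
  have hnil : ∀ β, IsZigzagKnightPath β → ψ β ≠ [] := by
    intro β hβ h
    have h2' := (good β hβ).2
    have hs := pathSize_nonneg ((zkp_iff _).1 hβ).1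
    rw [h] at h2'
    simp only [List.length_nil, Nat.cast_zero, zero_mul] at h2'
    omega
  have pre := fun β hβ => ((good β hβ).1).2.1
  have sm := fun β hβ => ((good β hβ).1).2.2.1
  suffices H : ∀ n p q, p.length = n → IsZigzagKnightPath p → IsZigzagKnightPath q →
      ψ p = ψ q → p = q by
    exact fun p q hp hq h => H p.length p q rfl hp hq h
  intro n
  induction n using Nat.strong_induction_on with
  | _ n ih =>
    intro p q hlen hp hq heq
    rcases eq_or_ne p [] with rfl | hpne <;> rcases eq_or_ne q [] with rfl | hqne
    · rfl
    · exfalso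
      rcases zkp_decomp hq hqne with ⟨β, rfl, hβ⟩ | ⟨β, rfl, hβ⟩ | ⟨β, γ, rfl, hβ, hγ⟩
      · rw [h0, h1 β hβ] at heq
        simp at heq
      · rw [h0, h2 β hβ] at heq
        simp at heq
        exact hnil β hβ heq
      · rw [h0, h3 β γ hβ hγ] at heq
        simp at heq
    · exfalso
      rcases zkp_decomp hp hpne with ⟨β, rfl, hβ⟩ | ⟨β, rfl, hβ⟩ | ⟨β, γ, rfl, hβ, hγ⟩
      · rw [h0, h1 β hβ] at heq
        simp at heq
      · rw [h0, h2 β hβ] at heq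
        simp at heq
        exact hnil β hβ heq
      · rw [h0, h3 β γ hβ hγ] at heq
        simp at heq
    · rcases zkp_decomp hp hpne with ⟨β, rfl, hβ⟩ | ⟨β, rfl, hβ⟩ | ⟨β, γ, rfl, hβ, hγ⟩ <;>
        rcases zkp_decomp hq hqne with ⟨β', rfl, hβ'⟩ | ⟨β', rfl, hβ'⟩ | ⟨β', γ', rfl, hβ', hγ'⟩
      · -- EE vs EE
        rw [h1 β hβ, h1 β' hβ'] at heq
        simp only [List.cons.injEq, true_and] at heq
        obtain ⟨hMeq, -⟩ := depair (sm β hβ) (pre β' hβ') (sm β' hβ') (pre β hβ) heq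
        have : β = β' := ih β.length (by simp [← hlen]) β β' rfl hβ hβ' hMeq
        rw [this]
      · rw [h1 β hβ, h2 β' hβ'] at heq
        simp at heq
      · -- EE vs NE
        rw [h1 β hβ, h3 β' γ' hβ' hγ'] at heq
        simp only [List.cons.injEq, true_and] at heq
        obtain ⟨-, hweq⟩ := depair (sm β hβ) (pre β' hβ') (sm β' hβ') (pre β hβ) heq
        exact absurd hweq.symm (hnil γ' hγ')
      · rw [h2 β hβ, h1 β' hβ'] at heq
        simp at heq
      · -- NN vs NN
        rw [h2 β hβ, h2 β' hβ'] at heq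
        simp only [List.cons.injEq, true_and] at heq
        have : β = β' := ih β.length (by simp [← hlen]) β β' rfl hβ hβ' heq
        rw [this]
      · rw [h2 β hβ, h3 β' γ' hβ' hγ'] at heq
        simp at heq
      · -- NE vs EE
        rw [h3 β γ hβ hγ, h1 β' hβ'] at heq
        simp only [List.cons.injEq, true_and] at heq
        obtain ⟨-, hweq⟩ := depair (sm β hβ) (pre β' hβ') (sm β' hβ') (pre β hβ) heq
        exact absurd hweq (hnil γ hγ)
      · rw [h3 β γ hβ hγ, h2 β' hβ'] at heq
        simp at heq
      · -- NE vs NE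
        rw [h3 β γ hβ hγ, h3 β' γ' hβ' hγ'] at heq
        simp only [List.cons.injEq, true_and] at heq
        obtain ⟨hMeq, hweq⟩ := depair (sm β hβ) (pre β' hβ') (sm β' hβ') (pre β hβ) heq
        have e1 : β = β' := ih β.length
          (by simp only [← hlen, List.length_cons, List.length_append]; omega)
          β β' rfl hβ hβ' hMeq
        have e2 : γ = γ' := ih γ.length
          (by simp only [← hlen, List.length_cons, List.length_append]; omega)
          γ γ' rfl hγ hγ' hweq
        rw [e1, e2]

lemma psi_surj (ψ : List (ℤ × ℤ) → List ℤ)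
    (h0 : ψ [] = [0])
    (h1 : ∀ β, IsZigzagKnightPath β → ψ (Estep :: Ebar :: β) = 1 :: (ψ β ++ [-1]))
    (h2 : ∀ β, IsZigzagKnightPath β → ψ (Nstep :: Nbar :: β) = 0 :: ψ β)
    (h3 : ∀ β γ, IsZigzagKnightPath β → IsZigzagKnightPath γ →
        ψ (Nstep :: Ebar :: (β ++ Estep :: Nbar :: γ)) = 1 :: (ψ β ++ -1 :: ψ γ)) :
    ∀ m, IsPeaklessMotzkin m → m ≠ [] → ∃ p, IsZigzagKnightPath p ∧ ψ p = m := by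
  suffices H : ∀ n m, m.length = n → IsPeaklessMotzkin m → m ≠ [] →
      ∃ p, IsZigzagKnightPath p ∧ ψ p = m by
    exact fun m hm hne => H m.length m rfl hm hne
  intro n
  induction n using Nat.strong_induction_on with
  | _ n ih =>
    intro m hlen hm hne
    obtain ⟨helem, hpre, hsum, hch⟩ := hm
    obtain ⟨c, t, rfl⟩ : ∃ c t, m = c :: t := by
      cases m with
      | nil => exact absurd rfl hne
      | cons c t => exact ⟨c, t, rfl⟩
    have hc := helem c (by simp)
    have hc1 : c ≠ -1 := by
      intro h
      have := hpre 1
      simp [h] at this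
    rcases hc with rfl | rfl | rfl
    · -- c = 1 : the interesting case
      have hstep : ∀ j : ℕ, (((1:ℤ) :: t).take (j+1)).sum = 1 + (t.take j).sum := by
        intro j
        simp [List.take_succ_cons]
      have hPex : ∃ k, (((1:ℤ) :: t).take k).sum = 0 ∧ 1 ≤ k :=
        ⟨((1:ℤ) :: t).length, by simpa using hsum, by simp⟩
      have hnot : ∀ k, ((((1:ℤ) :: t).take k).sum = 0 ∧ 1 ≤ k) → 2 ≤ k := by
        intro k hk
        match k with
        | 0 => omega
        | 1 =>
          exfalso
          have := hk.1
          simp at this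
        | (j+2) => omega
      obtain ⟨k, hk0, hklen, hjge, hk2⟩ :
          ∃ k, (((1:ℤ) :: t).take k).sum = 0 ∧ k ≤ ((1:ℤ) :: t).length ∧
            (∀ j, 1 ≤ j → j < k → 1 ≤ (((1:ℤ) :: t).take j).sum) ∧ 2 ≤ k := by
        refine ⟨Nat.find hPex, (Nat.find_spec hPex).1,
          Nat.find_min' hPex ⟨by simpa using hsum, by simp⟩, ?_,
          hnot _ (Nat.find_spec hPex)⟩
        intro j hj1 hjk
        have ha := Nat.find_min hPex hjk
        have hb := hpre j
        simp only [not_and, not_le] at ha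
        rcases eq_or_ne ((((1:ℤ) :: t).take j).sum) 0 with h | h
        · exact absurd (ha h) (by omega)
        · omega
      obtain ⟨k2, rfl⟩ : ∃ k2, k = k2 + 2 := ⟨k - 2, by omega⟩
      have hik1 : k2 + 1 < ((1:ℤ) :: t).length := by
        simp at hklen ⊢
        omega
      have hik2 : k2 < t.length := by
        simp at hklen
        omega
      have htk2 : ((1:ℤ) :: t).take (k2+2) =
          ((1:ℤ) :: t).take (k2+1) ++ [((1:ℤ) :: t)[k2+1]'hik1] := by
        rw [show k2 + 2 = (k2 + 1) + 1 from rfl, List.take_succ,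
          List.getElem?_eq_getElem hik1]
        rfl
      have hs1 : 1 ≤ (((1:ℤ) :: t).take (k2+1)).sum := hjge (k2+1) (by omega) (by omega)
      have hEqe : (((1:ℤ) :: t).take (k2+2)).sum =
          (((1:ℤ) :: t).take (k2+1)).sum + ((1:ℤ) :: t)[k2+1]'hik1 := by
        rw [htk2, List.sum_append]
        simp
      have he_cases := helem _ (List.getElem_mem hik1)
      have he : ((1:ℤ) :: t)[k2+1]'hik1 = -1 := by omega
      have hs1' : (((1:ℤ) :: t).take (k2+1)).sum = 1 := by omega
      have het : t[k2]'hik2 = -1 := by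
        rw [← he]
        simp [List.getElem_cons_succ]
      set w := t.drop (k2+1) with hwdef
      set M := t.take k2 with hMdef
      have hdrop : t.drop k2 = -1 :: w := by
        rw [List.drop_eq_getElem_cons hik2, het]
      have hmEq : t = M ++ -1 :: w := by
        conv_lhs => rw [← List.take_append_drop k2 t, hdrop]
      have hMpre : ∀ i, 0 ≤ (M.take i).sum := by
        intro i
        rw [hMdef, List.take_take]
        have h1 := hjge (min i k2 + 1) (by omega) (by omega)
        rw [hstep] at h1
        omega
      have hMsum : M.sum = 0 := by
        have h1 := hstep k2
        rw [show k2 + 1 = k2 + 1 from rfl] at h1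
        have : M.sum = (t.take k2).sum := by rw [hMdef]
        omega
      have hMelem : ∀ x ∈ M, x = 1 ∨ x = -1 ∨ x = 0 := by
        intro x hx
        exact helem x (by simp [List.mem_cons]; right; exact List.take_subset _ _ hx)
      have hMch : List.Chain' (fun a b => ¬ (a = 1 ∧ b = -1)) M :=
        (hch.tail).infix (List.take_prefix _ _).isInfix
      have hMmotz : IsPeaklessMotzkin M := ⟨hMelem, hMpre, hMsum, hMch⟩
      have hMne : M ≠ [] := by
        intro hM0
        rw [hM0] at hmEq
        simp at hmEq
        rw [hmEq] at hch
        exact (List.isChain_cons_cons.1 hch).1 ⟨rfl, rfl⟩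
      have hdm : ((1:ℤ) :: t).drop (k2+2) = w := by
        rw [List.drop_succ_cons]
      have hwpre : ∀ i, 0 ≤ (w.take i).sum := by
        intro i
        have h1 := hpre (k2 + 2 + i)
        rw [List.take_add, List.sum_append, hdm] at h1
        omega
      have hwsum : w.sum = 0 := by
        have h1 := congrArg List.sum (List.take_append_drop (k2+2) ((1:ℤ) :: t))
        rw [List.sum_append, hdm] at h1
        rw [hsum] at h1
        omega
      have hwelem : ∀ x ∈ w, x = 1 ∨ x = -1 ∨ x = 0 := by
        intro x hx
        exact helem x (by simp [List.mem_cons]; right; exact List.drop_subset _ _ hx)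
      have hwch : List.Chain' (fun a b => ¬ (a = 1 ∧ b = -1)) w :=
        (hch.tail).infix (List.drop_suffix _ _).isInfix
      have hwmotz : IsPeaklessMotzkin w := ⟨hwelem, hwpre, hwsum, hwch⟩
      obtain ⟨β, hβ, hψβ⟩ := ih M.length
        (by rw [hMdef]; simp only [List.length_take, ← hlen, List.length_cons]; omega)
        M rfl hMmotz hMne
      rcases eq_or_ne w [] with hw0 | hwne
      · refine ⟨Estep :: Ebar :: β, zkp_EE hβ, ?_⟩
        rw [h1 β hβ, hψβ, hmEq, hw0]
      · obtain ⟨γ, hγ, hψγ⟩ := ih w.length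
          (by rw [hwdef]; simp only [List.length_drop, ← hlen, List.length_cons]; omega)
          w rfl hwmotz hwne
        refine ⟨Nstep :: Ebar :: (β ++ Estep :: Nbar :: γ), zkp_NE hβ hγ, ?_⟩
        rw [h3 β γ hβ hγ, hψβ, hψγ, hmEq]
    · exact absurd rfl hc1
    · -- c = 0
      rcases eq_or_ne t [] with rfl | htne
      · exact ⟨[], zkp_nil, by rw [h0]⟩
      · have hmt : IsPeaklessMotzkin t := by
          refine ⟨fun x hx => helem x (by simp [hx]), ?_, by simpa using hsum, hch.tail⟩
          intro i
          have := hpre (i+1)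
          simpa using this
        obtain ⟨β, hβ, hψβ⟩ := ih t.length (by simp [← hlen]) t rfl hmt htne
        exact ⟨Nstep :: Nbar :: β, zkp_NN hβ, by rw [h2 β hβ, hψβ]⟩

end Stmt8Aux

/-- the map ψ with ψ(ε)=F, ψ(E Ē β)=U ψ(β) D, ψ(N N̄ β)=F ψ(β),
ψ(N Ē β E N̄ γ)=U ψ(β) D ψ(γ) is a bijection from zigzag knight's paths of size 2n
ending on the x-axis to peakless Motzkin paths of length n+1. -/


theorem stmt8 (ψ : List (ℤ × ℤ) → List ℤ)
    (h0 : ψ [] = [0])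
    (h1 : ∀ β, IsZigzagKnightPath β →
        ψ (Estep :: Ebar :: β) = 1 :: (ψ β ++ [-1]))
    (h2 : ∀ β, IsZigzagKnightPath β →
        ψ (Nstep :: Nbar :: β) = 0 :: ψ β)
    (h3 : ∀ β γ, IsZigzagKnightPath β → IsZigzagKnightPath γ →
        ψ (Nstep :: Ebar :: (β ++ Estep :: Nbar :: γ)) = 1 :: (ψ β ++ -1 :: ψ γ))
    (n : ℕ) :
    Set.BijOn ψ {p | IsZigzagKnightPath p ∧ pathSize p = 2 * n}
      {m | IsPeaklessMotzkin m ∧ m.length = n + 1} := by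
  have good := Stmt8Aux.psi_good ψ h0 h1 h2 h3
  have inj := Stmt8Aux.psi_inj ψ h0 h1 h2 h3
  have surj := Stmt8Aux.psi_surj ψ h0 h1 h2 h3
  refine ⟨?_, ?_, ?_⟩
  · rintro p ⟨hp, hsize⟩
    obtain ⟨hM, hL⟩ := good p hp
    refine ⟨hM, ?_⟩
    rw [hsize] at hL
    have h' : ((ψ p).length : ℤ) = (n : ℤ) + 1 := by push_cast at hL ⊢; omega
    exact_mod_cast h'
  · rintro p ⟨hp, -⟩ q ⟨hq, -⟩ h
    exact inj p q hp hq h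
  · rintro m ⟨hM, hml⟩
    have hmne : m ≠ [] := by
      intro h
      rw [h] at hml
      simp at hml
    obtain ⟨p, hp, hψ⟩ := surj m hM hmne
    refine ⟨p, ⟨hp, ?_⟩, hψ⟩
    obtain ⟨-, hL⟩ := good p hp
    rw [hψ, hml] at hL
    push_cast at hL
    omega
end
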